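/- arXiv:1108.5262 — 5 statements merged into one kernel-verified Lean document; each statement's English description precedes it below -/
import Mathlib

section
/- Let ρ:[0,1]→[0,1] be continuous and nondecreasing and let the threshold collection be t_k = ρ(k/m), 1 ≤ k ≤ m. For any realization of p-values p_1,…,p_m ∈ [0,1] and any λ ∈ {1,…,m}, let k̂ be the step-up-down index of order λ, and let Ĝ_m(x) = m^{-1} Σ_{i=1}^m 1{p_i ≤ x} be the empirical c.d.f. of the p-values. Then U(λ/m, Ĝ_m) ≤ k̂/m ≤ U(λ/m, (Ĝ_m + 1/m) ∧ 1). -/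
open MeasureTheory ProbabilityTheory Filter
open scoped ENNReal

noncomputable section

/-- The number of indices `i` with `p i ≤ x` (the p-values are `p 0, …, p (m-1)`). -/
def numLe {m : ℕ} (p : Fin m → ℝ) (x : ℝ) : ℕ :=
  Set.ncard {i : Fin m | p i ≤ x}

/-- The number of indices `i` among the true nulls (the first `m0` coordinates)
with `p i ≤ x`. -/
def numLeNull {m : ℕ} (m0 : ℕ) (p : Fin m → ℝ) (x : ℝ) : ℕ :=
  Set.ncard {i : Fin m | (i : ℕ) < m0 ∧ p i ≤ x}

/-- The step-up-down index `k̂` of order `lam` for the threshold collection `t`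
(the condition "`p_(k) ≤ t k`" on the `k`-th order statistic, with the conventions
`p_(0) = 0` and `t 0 = 0`, is encoded as `k ≤ numLe p (t k)`). -/
def sudIndex (lam : ℕ) (t : ℕ → ℝ) {m : ℕ} (p : Fin m → ℝ) : ℕ :=
  if lam ≤ numLe p (t lam) then
    sSup {k | k ≤ m ∧ ∀ k', lam ≤ k' → k' ≤ k → k' ≤ numLe p (t k')}
  else
    sSup {k | k ≤ lam ∧ k ≤ numLe p (t k)}

/-- The number of rejections of the procedure `SUD_lam(t)`: hypothesis `i` is rejected
iff `p i ≤ t k̂`. -/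
def sudNumRej (lam : ℕ) (t : ℕ → ℝ) {m : ℕ} (p : Fin m → ℝ) : ℕ :=
  numLe p (t (sudIndex lam t p))

/-- The number of erroneous rejections (type I errors) of `SUD_lam(t)` when the true
nulls are the first `m0` hypotheses. -/
def sudNumFalseRej (m0 lam : ℕ) (t : ℕ → ℝ) {m : ℕ} (p : Fin m → ℝ) : ℕ :=
  numLeNull m0 p (t (sudIndex lam t p))

/-- The false discovery proportion of `SUD_lam(t)`. -/
def sudFDP (m0 lam : ℕ) (t : ℕ → ℝ) {m : ℕ} (p : Fin m → ℝ) : ℝ :=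
  (sudNumFalseRej m0 lam t p : ℝ) / max (sudNumRej lam t p : ℝ) 1

/-- The false discovery rate of `SUD_lam(t)` (fixed number `m0` of true nulls). -/
def sudFDR {Ω : Type*} [MeasurableSpace Ω] (P : Measure Ω) (m0 lam : ℕ) (t : ℕ → ℝ)
    {m : ℕ} (p : Ω → Fin m → ℝ) : ℝ :=
  ∫ ω, sudFDP m0 lam t (p ω) ∂P

/-- The false discovery rate of `SUD_lam(t)` with a random number `M0` of true nulls. -/
def sudFDRrm {Ω : Type*} [MeasurableSpace Ω] (P : Measure Ω) (M0 : Ω → ℕ) (lam : ℕ)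
    (t : ℕ → ℝ) {m : ℕ} (p : Ω → Fin m → ℝ) : ℝ :=
  ∫ ω, sudFDP (M0 ω) lam t (p ω) ∂P

/-- A continuous c.d.f. on `[0,1]` (the class `𝓕`). -/
def IsCDF (F : ℝ → ℝ) : Prop :=
  ContinuousOn F (Set.Icc 0 1) ∧ MonotoneOn F (Set.Icc 0 1) ∧
    (∀ x ∈ Set.Icc (0:ℝ) 1, F x ∈ Set.Icc (0:ℝ) 1) ∧ F 1 = 1

/-- A (not necessarily continuous) c.d.f. on `[0,1]`. -/
def IsCDFw (F : ℝ → ℝ) : Prop :=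
  MonotoneOn F (Set.Icc 0 1) ∧ (∀ x ∈ Set.Icc (0:ℝ) 1, F x ∈ Set.Icc (0:ℝ) 1) ∧ F 1 = 1

/-- `μ` is a probability distribution on `[0,1]` with c.d.f. `F`. -/
def HasCDF (μ : Measure ℝ) (F : ℝ → ℝ) : Prop :=
  IsProbabilityMeasure μ ∧ μ (Set.Iio 0) = 0 ∧
    ∀ x ∈ Set.Icc (0:ℝ) 1, μ (Set.Iic x) = ENNReal.ofReal (F x)

/-- The fixed (two-group) mixture model `FM(m, m0, F)`: the p-values
`p · 0, …, p · (m-1)` are mutually independent, `[0,1]`-valued, the first `m0` of them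
(the true nulls) are uniform on `(0,1)` and the remaining ones have c.d.f. `F`.
The Dirac-uniform configuration `DU(m, m0)` is the case `F ≡ 1`. -/
def IsFM {Ω : Type*} [MeasurableSpace Ω] (P : Measure Ω) (m m0 : ℕ) (F : ℝ → ℝ)
    (p : Ω → Fin m → ℝ) : Prop :=
  IsProbabilityMeasure P ∧ (∀ i, Measurable fun ω => p ω i) ∧
    iIndepFun (fun i ω => p ω i) P ∧
    (∀ ω i, p ω i ∈ Set.Icc (0:ℝ) 1) ∧
    (∀ i : Fin m, (i : ℕ) < m0 → ∀ x ∈ Set.Icc (0:ℝ) 1,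
      P {ω | p ω i ≤ x} = ENNReal.ofReal x) ∧
    (∀ i : Fin m, m0 ≤ (i : ℕ) → ∀ x ∈ Set.Icc (0:ℝ) 1,
      P {ω | p ω i ≤ x} = ENNReal.ofReal (F x))

/-- The random (two-group) mixture model `RM(m, π0, F)`: the (unobserved) number `M0`
of true nulls is binomial `B(m, π0)` and, conditionally on `M0 = k`, the p-values
follow the fixed mixture model `FM(m, k, F)`. -/
def IsRM {Ω : Type*} [MeasurableSpace Ω] (P : Measure Ω) (m : ℕ) (pi0 : ℝ) (F : ℝ → ℝ)
    (p : Ω → Fin m → ℝ) (M0 : Ω → ℕ) : Prop :=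
  IsProbabilityMeasure P ∧ Measurable M0 ∧
    (∀ k : ℕ, P {ω | M0 ω = k} =
      ENNReal.ofReal ((m.choose k : ℝ) * pi0 ^ k * (1 - pi0) ^ (m - k))) ∧
    (∀ k ≤ m, P {ω | M0 ω = k} ≠ 0 → IsFM (P[|{ω | M0 ω = k}]) m k F p)

/-- The quantity `𝒰(t0, G)` associated with the critical value function `ρ`. -/
def Ufix (ρ : ℝ → ℝ) (t0 : ℝ) (G : ℝ → ℝ) : ℝ :=
  if t0 ≤ G (ρ t0) then sInf {u | u ∈ Set.Icc t0 1 ∧ G (ρ u) ≤ u}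
  else sSup {u | u ∈ Set.Icc 0 t0 ∧ u ≤ G (ρ u)}

/-- `u⁺_δ = 𝒰(l, (G^{DU}_ζ + δ) ∧ 1)` where `G^{DU}_ζ(x) = (1-ζ) + ζx`. -/
def uPlusDU (ρ : ℝ → ℝ) (l ζ δ : ℝ) : ℝ :=
  Ufix ρ l fun x => min ((1 - ζ) + ζ * x + δ) 1

/-- `u⁻_δ = 𝒰(l, (G^{DU}_ζ - δ) ∨ 0)` where `G^{DU}_ζ(x) = (1-ζ) + ζx`. -/
def uMinusDU (ρ : ℝ → ℝ) (l ζ δ : ℝ) : ℝ :=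
  Ufix ρ l fun x => max ((1 - ζ) + ζ * x - δ) 0

/-- The remainder term `ε(δ, m, ζ, y)`. -/
def epsBound (ρ : ℝ → ℝ) (l δ : ℝ) (m : ℕ) (ζ y : ℝ) : ℝ :=
  (ρ (uPlusDU ρ l ζ δ) - ρ (uMinusDU ρ l ζ δ)) / uPlusDU ρ l ζ δ +
    4 / (1 - ζ) *
      Real.exp (-2 * m * max (δ - y - 1 / m) 0 ^ 2 * max (1 - y / ζ) 0)

/-- The uniform distribution on `(0,1)`. -/
def unifMeasure : Measure ℝ := volume.restrict (Set.Ioo 0 1)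

/-- `Ψ_{k,k0,F}(s 1, …, s k) = P(U_(1) ≤ s 1, …, U_(k) ≤ s k)`, where
`U_1, …, U_{k0}` are i.i.d. uniform on `(0,1)`, independent of `U_{k0+1}, …, U_k`
which are i.i.d. with distribution `μ` (of c.d.f. `F`); the condition
"`U_(j) ≤ s j`" on the `j`-th order statistic is encoded as `j ≤ numLe U (s j)`. -/
def Psi (k k0 : ℕ) (μ : Measure ℝ) (s : ℕ → ℝ) : ℝ :=
  ((Measure.pi fun i : Fin k => if (i : ℕ) < k0 then unifMeasure else μ)
    {U : Fin k → ℝ | ∀ j : ℕ, 1 ≤ j → j ≤ k → j ≤ numLe U (s j)}).toReal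

/-- The one-population quantity `Ψ_k(s 1, …, s k)` (all variables uniform). -/
def Psi1 (k : ℕ) (s : ℕ → ℝ) : ℝ := Psi k k unifMeasure s

/-- The quantity `𝒬_{m,m0,F}(s, k, j)`, where `ν` is a distribution with
c.d.f. `F̄(u) = 1 - F(1-u)`. -/
def Qcal (m m0 : ℕ) (F : ℝ → ℝ) (ν : Measure ℝ) (s : ℕ → ℝ) (k j : ℕ) : ℝ :=
  (m0.choose j : ℝ) * ((m - m0).choose (k - j) : ℝ) * s k ^ j * F (s k) ^ (k - j) *
    Psi (m - k) (m0 - j) ν fun i => 1 - s (m + 1 - i)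

/-- The quantity `𝒬̃_{m,m0,F}(s, k, j)`, where `μ` is a distribution with c.d.f. `F`. -/
def Qtild (m m0 : ℕ) (F : ℝ → ℝ) (μ : Measure ℝ) (s : ℕ → ℝ) (k j : ℕ) : ℝ :=
  (m0.choose j : ℝ) * ((m - m0).choose (k - j) : ℝ) * (1 - s (k + 1)) ^ (m0 - j) *
    (1 - F (s (k + 1))) ^ ((m - m0) - (k - j)) * Psi k j μ s

/-- The quantity `𝒫_{m,π0,F}(s, k, j)` (with `G = π0 · id + (1-π0) F`). -/
def Pcal (m : ℕ) (pi0 : ℝ) (F : ℝ → ℝ) (s : ℕ → ℝ) (k j : ℕ) : ℝ :=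
  (m.choose j : ℝ) * ((m - j).choose (k - j) : ℝ) * pi0 ^ j * (1 - pi0) ^ (k - j) *
    s k ^ j * F (s k) ^ (k - j) *
    Psi1 (m - k) fun i => 1 - (pi0 * s (m + 1 - i) + (1 - pi0) * F (s (m + 1 - i)))

/-- The quantity `𝒫̃_{m,π0,F}(s, k, j)`, where `μ` is a distribution with c.d.f. `F`. -/
def Ptild (m : ℕ) (pi0 : ℝ) (F : ℝ → ℝ) (μ : Measure ℝ) (s : ℕ → ℝ) (k j : ℕ) : ℝ :=
  (m.choose j : ℝ) * ((m - j).choose (k - j) : ℝ) * pi0 ^ j * (1 - pi0) ^ (k - j) *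
    (1 - (pi0 * s (k + 1) + (1 - pi0) * F (s (k + 1)))) ^ (m - k) * Psi k j μ s

lemma numLe_le_card {m : ℕ} (p : Fin m → ℝ) (x : ℝ) : numLe p x ≤ m := by
  have h := Set.ncard_le_ncard (Set.subset_univ {i : Fin m | p i ≤ x}) Set.finite_univ
  simpa [numLe, Set.ncard_univ] using h

lemma numLe_mono {m : ℕ} (p : Fin m → ℝ) {x y : ℝ} (h : x ≤ y) :
    numLe p x ≤ numLe p y :=
  Set.ncard_le_ncard (fun i hi => le_trans hi h) (Set.toFinite _)

/-- Lemma: the SUD index `k̂` is sandwiched between `𝒰(λ/m, Ĝ_m)` and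
`𝒰(λ/m, (Ĝ_m + 1/m) ∧ 1)`, where `Ĝ_m` is the empirical c.d.f. of the p-values. -/
theorem sudIndex_between_Ufix
    (m : ℕ) (hm : 2 ≤ m)
    (ρ : ℝ → ℝ) (hρcont : ContinuousOn ρ (Set.Icc 0 1))
    (hρmono : MonotoneOn ρ (Set.Icc 0 1))
    (hρmap : ∀ x ∈ Set.Icc (0:ℝ) 1, ρ x ∈ Set.Icc (0:ℝ) 1)
    (lam : ℕ) (hlam : 1 ≤ lam ∧ lam ≤ m)
    (p : Fin m → ℝ) (hp : ∀ i, p i ∈ Set.Icc (0:ℝ) 1) :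
    Ufix ρ ((lam : ℝ) / m) (fun x => (numLe p x : ℝ) / m) ≤
        (sudIndex lam (fun k => ρ ((k : ℝ) / m)) p : ℝ) / m ∧
      (sudIndex lam (fun k => ρ ((k : ℝ) / m)) p : ℝ) / m ≤
        Ufix ρ ((lam : ℝ) / m) (fun x => min ((numLe p x : ℝ) / m + 1 / m) 1) := by
  obtain ⟨hlam1, hlamm⟩ := hlam
  have hmpos : 0 < m := by omega
  have hm0 : (0:ℝ) < m := by exact_mod_cast hmpos
  have hcast : ∀ a b : ℕ, ((a:ℝ)/m ≤ (b:ℝ)/m ↔ a ≤ b) := by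
    intro a b
    rw [div_le_div_iff_of_pos_right hm0]
    exact Nat.cast_le
  have hmemIcc : ∀ k : ℕ, k ≤ m → ((k:ℝ)/m) ∈ Set.Icc (0:ℝ) 1 := by
    intro k hk
    refine ⟨by positivity, ?_⟩
    rw [div_le_one hm0]; exact_mod_cast hk
  have hGle1 : ∀ x : ℝ, (numLe p x : ℝ) / m ≤ 1 := by
    intro x
    rw [div_le_one hm0]
    exact_mod_cast numLe_le_card p x
  have hGmono : ∀ {x y : ℝ}, x ≤ y → (numLe p x : ℝ)/m ≤ (numLe p y : ℝ)/m := by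
    intro x y h
    have h2 : (numLe p x : ℝ) ≤ numLe p y := by exact_mod_cast numLe_mono p h
    gcongr
  have hGρmono : ∀ {u v : ℝ}, u ∈ Set.Icc (0:ℝ) 1 → v ∈ Set.Icc (0:ℝ) 1 → u ≤ v →
      (numLe p (ρ u) : ℝ)/m ≤ (numLe p (ρ v) : ℝ)/m :=
    fun hu hv huv => hGmono (hρmono hu hv huv)
  have hlampos : (0:ℝ) < lam := by exact_mod_cast (by omega : 0 < lam)
  have ht0pos : (0:ℝ) < (lam:ℝ)/m := div_pos hlampos hm0
  have ht0le1 : (lam:ℝ)/m ≤ 1 := by rw [div_le_one hm0]; exact_mod_cast hlamm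
  by_cases hc : lam ≤ numLe p (ρ ((lam:ℝ)/m))
  · -- step-up phase
    set S : Set ℕ := {k | k ≤ m ∧ ∀ k', lam ≤ k' → k' ≤ k → k' ≤ numLe p (ρ ((k':ℝ)/m))}
      with hS
    have hSbdd : BddAbove S := ⟨m, fun k hk => hk.1⟩
    have hSlam : lam ∈ S := ⟨hlamm, fun k' h1 h2 => by
      have hk' : k' = lam := le_antisymm h2 h1
      rw [hk']; exact hc⟩
    have hSne : S.Nonempty := ⟨lam, hSlam⟩
    have hk_mem : sSup S ∈ S := Nat.sSup_mem hSne hSbdd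
    set khat := sSup S with hkhat
    have hk_le_m : khat ≤ m := hk_mem.1
    have hk_prop := hk_mem.2
    have hlam_le_k : lam ≤ khat := le_csSup hSbdd hSlam
    have hsud : sudIndex lam (fun k => ρ ((k:ℝ)/m)) p = khat := by
      simp only [sudIndex]
      rw [if_pos hc]
    have hcond : (lam:ℝ)/m ≤ (numLe p (ρ ((lam:ℝ)/m)) : ℝ)/m := (hcast _ _).mpr hc
    constructor
    · -- lower bound
      rw [hsud]
      simp only [Ufix]
      rw [if_pos hcond]
      set A : Set ℝ := {u | u ∈ Set.Icc ((lam:ℝ)/m) 1 ∧ (numLe p (ρ u):ℝ)/m ≤ u} with hA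
      have hAbdd : BddBelow A := ⟨(lam:ℝ)/m, fun u hu => hu.1.1⟩
      rcases eq_or_lt_of_le hk_le_m with hkm | hkm
      · have h1A : (1:ℝ) ∈ A := ⟨⟨ht0le1, le_rfl⟩, hGle1 _⟩
        have hle1 : sInf A ≤ 1 := csInf_le hAbdd h1A
        have hone : (khat:ℝ)/m = 1 := by
          rw [hkm]; exact div_self (ne_of_gt hm0)
        rw [hone]; exact hle1
      · -- khat < m
        have hnot : khat + 1 ∉ S := fun h => by
          have := le_csSup hSbdd h
          omega
        have hmaxN : numLe p (ρ (((khat+1 : ℕ):ℝ)/m)) ≤ khat := by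
          by_contra h
          push_neg at h
          exact hnot ⟨by omega, fun k' h1 h2 => by
            rcases Nat.lt_or_ge k' (khat+1) with h3 | h3
            · exact hk_prop k' h1 (by omega)
            · have hk' : k' = khat + 1 := by omega
              rw [hk']
              omega⟩
        have hmax : (numLe p (ρ (((khat:ℝ)+1)/m)) : ℝ) ≤ (khat:ℝ) := by
          push_cast at hmaxN ⊢
          exact_mod_cast hmaxN
        by_contra hcon
        push_neg at hcon
        -- hcon : (khat:ℝ)/m < sInf A
        have hxIcc : ((khat:ℝ)+1)/m ∈ Set.Icc (0:ℝ) 1 := by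
          have := hmemIcc (khat+1) (by omega)
          push_cast at this
          exact this
        have hklt : (khat:ℝ)/m < ((khat:ℝ)+1)/m := by
          rw [div_lt_div_iff_of_pos_right hm0]; linarith
        have hb : (khat:ℝ)/m < min (sInf A) (((khat:ℝ)+1)/m) := lt_min hcon hklt
        set u : ℝ := ((khat:ℝ)/m + min (sInf A) (((khat:ℝ)+1)/m))/2 with hu
        have hu1 : (khat:ℝ)/m < u := by
          rw [hu]; linarith
        have hu2 : u < min (sInf A) (((khat:ℝ)+1)/m) := by
          rw [hu]; linarith
        have hux : u ≤ ((khat:ℝ)+1)/m := le_of_lt (lt_of_lt_of_le hu2 (min_le_right _ _))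
        have huInf : u < sInf A := lt_of_lt_of_le hu2 (min_le_left _ _)
        have hut0 : (lam:ℝ)/m ≤ u := le_of_lt (lt_of_le_of_lt ((hcast _ _).mpr hlam_le_k) hu1)
        have hu0 : (0:ℝ) ≤ u := le_trans (le_of_lt ht0pos) hut0
        have hule1 : u ≤ 1 := le_trans hux hxIcc.2
        have hGu : (numLe p (ρ u):ℝ)/m ≤ u := by
          have h5 := hGρmono ⟨hu0, hule1⟩ hxIcc hux
          have h6 : (numLe p (ρ (((khat:ℝ)+1)/m)):ℝ)/m ≤ (khat:ℝ)/m := by gcongr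
          linarith
        have huA : u ∈ A := ⟨⟨hut0, hule1⟩, hGu⟩
        have := csInf_le hAbdd huA
        linarith
    · -- upper bound
      rw [hsud]
      simp only [Ufix]
      have h1m : (0:ℝ) ≤ 1/m := by positivity
      have hcond2 : (lam:ℝ)/m ≤ min ((numLe p (ρ ((lam:ℝ)/m)):ℝ)/m + 1/m) 1 := by
        refine le_min ?_ ht0le1
        linarith
      rw [if_pos hcond2]
      apply le_csInf
      · exact ⟨1, ⟨ht0le1, le_rfl⟩, min_le_right _ _⟩
      · rintro u ⟨⟨hut0, hu1⟩, hmin⟩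
        rcases min_le_iff.mp hmin with h2 | h2
        · by_contra hcon
          push_neg at hcon
          -- hcon : u < khat/m
          have hu0 : (0:ℝ) ≤ u := le_trans (le_of_lt ht0pos) hut0
          have hum0 : 0 ≤ u * m := by positivity
          set k' : ℕ := ⌊u * m⌋₊ with hk'def
          have hk'lam : lam ≤ k' := Nat.le_floor ((div_le_iff₀ hm0).mp hut0)
          have hk'lt : k' < khat := (Nat.floor_lt hum0).mpr ((lt_div_iff₀ hm0).mp hcon)
          have hNk' : k' ≤ numLe p (ρ ((k':ℝ)/m)) := hk_prop k' hk'lam (le_of_lt hk'lt)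
          have hk'u : (k':ℝ)/m ≤ u := by
            rw [div_le_iff₀ hm0]; exact Nat.floor_le hum0
          have hk'Icc : (k':ℝ)/m ∈ Set.Icc (0:ℝ) 1 := ⟨by positivity, le_trans hk'u hu1⟩
          have hmono := hGρmono hk'Icc ⟨hu0, hu1⟩ hk'u
          have hge : (k':ℝ)/m ≤ (numLe p (ρ ((k':ℝ)/m)):ℝ)/m := (hcast _ _).mpr hNk'
          have hfl : u * m < (k':ℝ) + 1 := Nat.lt_floor_add_one _
          have hult : u < ((k':ℝ)+1)/m := by rw [lt_div_iff₀ hm0]; linarith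
          rw [add_div] at hult
          linarith
        · have hkle1 : (khat:ℝ)/m ≤ 1 := (hmemIcc khat hk_le_m).2
          linarith
  · -- step-down phase
    set S : Set ℕ := {k | k ≤ lam ∧ k ≤ numLe p (ρ ((k:ℝ)/m))} with hS
    have hSbdd : BddAbove S := ⟨lam, fun k hk => hk.1⟩
    have hS0 : 0 ∈ S := ⟨Nat.zero_le _, Nat.zero_le _⟩
    have hk_mem : sSup S ∈ S := Nat.sSup_mem ⟨0, hS0⟩ hSbdd
    set khat := sSup S with hkhat
    have hk_le_lam : khat ≤ lam := hk_mem.1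
    have hk_le_N : khat ≤ numLe p (ρ ((khat:ℝ)/m)) := hk_mem.2
    have hmax2 : ∀ k, khat < k → k ≤ lam → numLe p (ρ ((k:ℝ)/m)) < k := by
      intro k h1 h2
      by_contra h
      push_neg at h
      have := le_csSup hSbdd (⟨h2, h⟩ : k ∈ S)
      omega
    have hsud : sudIndex lam (fun k => ρ ((k:ℝ)/m)) p = khat := by
      simp only [sudIndex]
      rw [if_neg hc]
    have hkle1 : (khat:ℝ)/m ≤ 1 := (hmemIcc khat (le_trans hk_le_lam hlamm)).2
    constructor
    · -- lower bound
      rw [hsud]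
      simp only [Ufix]
      have hcondneg : ¬ ((lam:ℝ)/m ≤ (numLe p (ρ ((lam:ℝ)/m)):ℝ)/m) :=
        fun h => hc ((hcast _ _).mp h)
      rw [if_neg hcondneg]
      apply csSup_le
      · exact ⟨0, ⟨le_rfl, le_of_lt ht0pos⟩, by positivity⟩
      · rintro u ⟨⟨hu0, hut0⟩, hG⟩
        by_contra hcon
        push_neg at hcon
        -- hcon : khat/m < u
        have hum0 : 0 ≤ u * m := by positivity
        set k : ℕ := ⌈u * m⌉₊ with hkdef
        have hklam : k ≤ lam := Nat.ceil_le.mpr ((le_div_iff₀ hm0).mp hut0)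
        have hkgt : khat < k := by
          have h1 : (khat:ℝ) < u * m := (div_lt_iff₀ hm0).mp hcon
          have h2 : u * m ≤ (k:ℝ) := Nat.le_ceil _
          exact_mod_cast lt_of_lt_of_le h1 h2
        have hNk : numLe p (ρ ((k:ℝ)/m)) < k := hmax2 k hkgt hklam
        have huk : u ≤ (k:ℝ)/m := by rw [le_div_iff₀ hm0]; exact Nat.le_ceil _
        have hkIcc : (k:ℝ)/m ∈ Set.Icc (0:ℝ) 1 := hmemIcc k (le_trans hklam hlamm)
        have huIcc : u ∈ Set.Icc (0:ℝ) 1 := ⟨hu0, le_trans hut0 ht0le1⟩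
        have hmono := hGρmono huIcc hkIcc huk
        have hceil : (k:ℝ) < u * m + 1 := Nat.ceil_lt_add_one hum0
        have h3 : (numLe p (ρ ((k:ℝ)/m)):ℝ) ≤ (k:ℝ) - 1 := by
          have h4 : (numLe p (ρ ((k:ℝ)/m)):ℝ) + 1 ≤ (k:ℝ) := by exact_mod_cast hNk
          linarith
        have h5 : (numLe p (ρ ((k:ℝ)/m)):ℝ)/m ≤ ((k:ℝ)-1)/m := by gcongr
        have h6 : ((k:ℝ)-1)/m < u := by rw [div_lt_iff₀ hm0]; linarith
        linarith
    · -- upper bound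
      rw [hsud]
      simp only [Ufix]
      by_cases hb : (lam:ℝ)/m ≤ min ((numLe p (ρ ((lam:ℝ)/m)):ℝ)/m + 1/m) 1
      · rw [if_pos hb]
        have hkt0 : (khat:ℝ)/m ≤ (lam:ℝ)/m := (hcast _ _).mpr hk_le_lam
        refine le_trans hkt0 (le_csInf ⟨1, ⟨ht0le1, le_rfl⟩, min_le_right _ _⟩ ?_)
        rintro u ⟨⟨hut0, _⟩, _⟩
        exact hut0
      · rw [if_neg hb]
        apply le_csSup ⟨(lam:ℝ)/m, fun u hu => hu.1.2⟩
        refine ⟨⟨by positivity, (hcast _ _).mpr hk_le_lam⟩, ?_⟩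
        refine le_min ?_ hkle1
        have h7 : (khat:ℝ)/m ≤ (numLe p (ρ ((khat:ℝ)/m)):ℝ)/m := (hcast _ _).mpr hk_le_N
        have h1m : (0:ℝ) ≤ 1/m := by positivity
        linarith
end
end

section
/- Let m ≥ 1 and m_0 ∈ {0,…,m}. Let p = (p_1,…,p_m) be a family of [0,1]-valued random variables such that p_1,…,p_{m_0} are mutually independent and each satisfies P(p_i ≤ x) ≤ x for all x ∈ [0,1] (stochastically lower bounded by a uniform variable); no assumption is made on p_{m_0+1},…,p_m beyond joint measurability. Let δ be a multiple testing procedure rejecting exactly the hypotheses i with p_i ≤ t*(p), where t* : [0,1]^m → [0,1] is nonincreasing in each coordinate. Let V_m(p) = |{i ≤ m_0 : p_i ≤ t*(p)}| and let φ : ℕ → ℝ be nondecreasing. Then E_P[φ(V_m(p))] ≤ E_{DU(m,m_0)}[φ(V_m(p))], where DU(m,m_0) is the distribution under which p_1,…,p_{m_0} are i.i.d. uniform on (0,1) and p_{m_0+1} = … = p_m = 0 almost surely. -/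
open MeasureTheory ProbabilityTheory Filter
open scoped ENNReal

noncomputable section

section AuxLFC

/-- Measure comparison on lower sets of `ℝ`, from comparison on `Iic` sets. -/
lemma auxLFC_meas_lowerSet_le {μ ν : Measure ℝ} [IsProbabilityMeasure μ]
    [IsProbabilityMeasure ν] (hIic : ∀ c, μ (Set.Iic c) ≤ ν (Set.Iic c))
    {L : Set ℝ} (hL : IsLowerSet L) : μ L ≤ ν L := by
  rcases Set.eq_empty_or_nonempty L with rfl | hne
  · simp
  by_cases hbdd : BddAbove L
  · set b := sSup L with hb
    by_cases hbL : b ∈ L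
    · have hLI : L = Set.Iic b :=
        subset_antisymm (fun x hx => le_csSup hbdd hx) (fun x hx => hL hx hbL)
      rw [hLI]; exact hIic b
    · have hLI : L = Set.Iio b := by
        apply subset_antisymm
        · intro x hx
          refine lt_of_le_of_ne (le_csSup hbdd hx) fun h => ?_
          rw [h] at hx
          exact hbL hx
        · intro x hx
          obtain ⟨y, hy, hxy⟩ := exists_lt_of_lt_csSup hne hx
          exact hL hxy.le hy
      have hunion : (⋃ n : ℕ, Set.Iic (b - 1 / (n + 1))) = Set.Iio b := by
        ext x
        simp only [Set.mem_iUnion, Set.mem_Iic, Set.mem_Iio]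
        constructor
        · rintro ⟨n, hn⟩
          have h1 : (0:ℝ) < 1 / ((n:ℝ) + 1) := by positivity
          linarith
        · intro hx
          obtain ⟨n, hn⟩ := exists_nat_one_div_lt (sub_pos.2 hx)
          exact ⟨n, by linarith⟩
      have hmono : Monotone fun n : ℕ => Set.Iic (b - 1 / ((n:ℝ) + 1)) := by
        intro a c hac
        apply Set.Iic_subset_Iic.2
        have hca : (a:ℝ) ≤ (c:ℝ) := Nat.cast_le.2 hac
        have h1 : (1:ℝ)/((c:ℝ)+1) ≤ 1/((a:ℝ)+1) :=
          one_div_le_one_div_of_le (by positivity) (by linarith)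
        linarith
      rw [hLI, ← hunion, hmono.directed_le.measure_iUnion,
        hmono.directed_le.measure_iUnion]
      exact iSup_mono fun n => hIic _
  · have hLu : L = Set.univ := by
      ext x; simp only [Set.mem_univ, iff_true]
      obtain ⟨y, hy, hxy⟩ := not_bddAbove_iff.1 hbdd x
      exact hL hxy.le hy
    rw [hLu]
    simp

/-- One-dimensional comparison of lower integrals of a bounded antitone function. -/
lemma auxLFC_lintegral_antitone_le {μ ν : Measure ℝ} [IsProbabilityMeasure μ]
    [IsProbabilityMeasure ν] (hIic : ∀ c, μ (Set.Iic c) ≤ ν (Set.Iic c))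
    {f : ℝ → ℝ≥0∞} (hf : Antitone f) {C : ℝ≥0∞} (hC : C ≠ ⊤) (hfC : ∀ x, f x ≤ C) :
    ∫⁻ x, f x ∂μ ≤ ∫⁻ x, f x ∂ν := by
  set g : ℝ → ℝ := fun x => (f x).toReal with hg
  have hftop : ∀ x, f x ≠ ⊤ := fun x => (lt_of_le_of_lt (hfC x) hC.lt_top).ne
  have hganti : Antitone g := fun a b hab => ENNReal.toReal_mono (hftop a) (hf hab)
  have hfg : ∀ x, f x = ENNReal.ofReal (g x) := fun x =>
    (ENNReal.ofReal_toReal (hftop x)).symm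
  have hgnn : ∀ x, 0 ≤ g x := fun x => ENNReal.toReal_nonneg
  have hlset : ∀ t : ℝ, IsLowerSet {a : ℝ | t ≤ g a} := by
    intro t a b hba ha
    exact le_trans ha (hganti hba)
  calc ∫⁻ x, f x ∂μ = ∫⁻ x, ENNReal.ofReal (g x) ∂μ := by simp_rw [← hfg]
    _ = ∫⁻ t in Set.Ioi (0:ℝ), μ {a | t ≤ g a} :=
        lintegral_eq_lintegral_meas_le μ (Filter.Eventually.of_forall hgnn)
          hganti.measurable.aemeasurable
    _ ≤ ∫⁻ t in Set.Ioi (0:ℝ), ν {a | t ≤ g a} :=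
        lintegral_mono fun t => auxLFC_meas_lowerSet_le hIic (hlset t)
    _ = ∫⁻ x, ENNReal.ofReal (g x) ∂ν :=
        (lintegral_eq_lintegral_meas_le ν (Filter.Eventually.of_forall hgnn)
          hganti.measurable.aemeasurable).symm
    _ = ∫⁻ x, f x ∂ν := by simp_rw [← hfg]

/-- Comparison of lower integrals of a bounded antitone function against product
measures whose factors are compared on `Iic` sets. -/
lemma auxLFC_pi_lintegral_antitone_le :
    ∀ (n : ℕ) (μ ν : Fin n → Measure ℝ),
      (∀ i, IsProbabilityMeasure (μ i)) → (∀ i, IsProbabilityMeasure (ν i)) →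
      (∀ i c, μ i (Set.Iic c) ≤ ν i (Set.Iic c)) →
      ∀ (f : (Fin n → ℝ) → ℝ≥0∞) (C : ℝ≥0∞), C ≠ ⊤ → Measurable f → Antitone f →
        (∀ q, f q ≤ C) →
      ∫⁻ q, f q ∂Measure.pi μ ≤ ∫⁻ q, f q ∂Measure.pi ν := by
  intro n
  induction n with
  | zero =>
    intro μ ν hμ hν _ f C _ _ _ _
    haveI := hμ; haveI := hν
    rw [lintegral_unique, lintegral_unique, measure_univ, measure_univ]
  | succ n ih =>
    intro μ ν hμ hν hIic f C hC hfm hfa hfC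
    haveI := hμ; haveI := hν
    set e := MeasurableEquiv.piFinSuccAbove (fun _ : Fin (n + 1) => ℝ) 0 with he
    have hsymm : ∀ z : ℝ × (Fin n → ℝ), e.symm z = Fin.cons z.1 z.2 := by
      intro z
      show Fin.insertNthEquiv (fun _ => ℝ) 0 z = Fin.cons z.1 z.2
      rw [Fin.insertNthEquiv_zero]
      rfl
    have hcons_mono : ∀ (x x' : ℝ) (y y' : Fin n → ℝ), x ≤ x' → y ≤ y' →
        (Fin.cons x y : Fin (n+1) → ℝ) ≤ Fin.cons x' y' := by
      intro x x' y y' hx hy i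
      refine Fin.cases ?_ ?_ i
      · simpa using hx
      · intro j; simpa using hy j
    have hconsm : ∀ x : ℝ, Measurable (fun y : Fin n → ℝ => (Fin.cons x y : Fin (n+1) → ℝ)) := by
      intro x
      apply measurable_pi_lambda
      intro i
      refine Fin.cases ?_ ?_ i
      · simpa using (measurable_const : Measurable fun _ : Fin n → ℝ => x)
      · intro j; simpa using measurable_pi_apply j
    have hrep : ∀ (κ : Fin (n+1) → Measure ℝ), (∀ i, IsProbabilityMeasure (κ i)) →
        ∫⁻ q, f q ∂Measure.pi κ =
          ∫⁻ x, ∫⁻ y, f (Fin.cons x y) ∂Measure.pi (fun j : Fin n => κ j.succ) ∂κ 0 := by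
      intro κ hκ
      haveI := hκ
      have hmp := measurePreserving_piFinSuccAbove κ 0
      have hsa : (fun j : Fin n => κ ((0 : Fin (n+1)).succAbove j)) = fun j => κ j.succ := by
        funext j; rw [Fin.succAbove_zero]
      have hcomp0 := hmp.lintegral_comp (f := f ∘ e.symm) (hfm.comp e.symm.measurable)
      have hcomp : ∫⁻ q, f q ∂Measure.pi κ
          = ∫⁻ z, (f ∘ e.symm) z
              ∂((κ 0).prod (Measure.pi fun j => κ ((0 : Fin (n+1)).succAbove j))) := by
        rw [← hcomp0]
        refine lintegral_congr fun q => ?_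
        show f q = f (e.symm (e q))
        rw [e.symm_apply_apply]
      rw [hcomp, hsa, lintegral_prod _ ((hfm.comp e.symm.measurable).aemeasurable)]
      refine lintegral_congr fun x => lintegral_congr fun y => ?_
      show f (e.symm (x, y)) = _
      rw [hsymm]
    calc ∫⁻ q, f q ∂Measure.pi μ
        = ∫⁻ x, ∫⁻ y, f (Fin.cons x y) ∂Measure.pi (fun j : Fin n => μ j.succ) ∂μ 0 :=
          hrep μ hμ
      _ ≤ ∫⁻ x, ∫⁻ y, f (Fin.cons x y) ∂Measure.pi (fun j : Fin n => ν j.succ) ∂μ 0 := by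
          refine lintegral_mono fun x => ?_
          exact ih (fun j => μ j.succ) (fun j => ν j.succ) (fun j => hμ j.succ)
            (fun j => hν j.succ) (fun j c => hIic j.succ c)
            (fun y => f (Fin.cons x y)) C hC (hfm.comp (hconsm x))
            (fun y y' hyy => hfa (hcons_mono x x _ _ le_rfl hyy))
            (fun y => hfC _)
      _ ≤ ∫⁻ x, ∫⁻ y, f (Fin.cons x y) ∂Measure.pi (fun j : Fin n => ν j.succ) ∂ν 0 := by
          refine auxLFC_lintegral_antitone_le (hIic 0) ?_ hC ?_
          · intro x x' hxx
            exact lintegral_mono fun y => hfa (hcons_mono x x' y y hxx le_rfl)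
          · intro x
            calc ∫⁻ y, f (Fin.cons x y) ∂Measure.pi (fun j : Fin n => ν j.succ)
                ≤ ∫⁻ _, C ∂Measure.pi (fun j : Fin n => ν j.succ) :=
                  lintegral_mono fun y => hfC _
              _ = C := by simp
      _ = ∫⁻ q, f q ∂Measure.pi ν := (hrep ν hν).symm

lemma auxLFC_numLeNull_eq_card {m m0 : ℕ} (p : Fin m → ℝ) (x : ℝ) :
    numLeNull m0 p x =
      (Finset.univ.filter fun i : Fin m => (i : ℕ) < m0 ∧ p i ≤ x).card := by
  classical
  rw [numLeNull, ← Set.ncard_coe_finset]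
  congr 1
  ext i
  simp

lemma auxLFC_numLeNull_mono {m m0 : ℕ} {p p' : Fin m → ℝ} {x x' : ℝ}
    (hp : ∀ i : Fin m, (i : ℕ) < m0 → p' i ≤ p i) (hx : x ≤ x') :
    numLeNull m0 p x ≤ numLeNull m0 p' x' := by
  apply Set.ncard_le_ncard _ (Set.toFinite _)
  rintro i ⟨h1, h2⟩
  exact ⟨h1, le_trans (hp i h1) (le_trans h2 hx)⟩

lemma auxLFC_numLeNull_le {m m0 : ℕ} (p : Fin m → ℝ) (x : ℝ) : numLeNull m0 p x ≤ m := by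
  rw [numLeNull]
  calc Set.ncard {i : Fin m | (i : ℕ) < m0 ∧ p i ≤ x}
      ≤ Set.ncard (Set.univ : Set (Fin m)) :=
        Set.ncard_le_ncard (Set.subset_univ _) Set.finite_univ
    _ = m := by simp [Set.ncard_univ]

lemma auxLFC_measurable_numLeNull {α : Type*} [MeasurableSpace α] {m m0 : ℕ}
    {u : α → Fin m → ℝ} {x : α → ℝ} (hu : Measurable u) (hx : Measurable x) :
    Measurable fun a => numLeNull m0 (u a) (x a) := by
  classical
  simp_rw [auxLFC_numLeNull_eq_card, Finset.card_filter]
  apply Finset.measurable_sum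
  intro i _
  by_cases hi : (i : ℕ) < m0
  · simp only [hi, true_and]
    exact Measurable.ite (measurableSet_le ((measurable_pi_apply i).comp hu) hx)
      measurable_const measurable_const
  · simp [hi]

lemma auxLFC_map_eq_pi {Ω : Type*} [MeasurableSpace Ω] {n : ℕ} (P : Measure Ω)
    [IsProbabilityMeasure P] (f : Fin n → Ω → ℝ) (hmeas : ∀ i, Measurable (f i))
    (hind : iIndepFun f P) :
    P.map (fun ω i => f i ω) = Measure.pi fun i => P.map (f i) := by
  haveI : ∀ i, IsProbabilityMeasure (P.map (f i)) := fun i =>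
    Measure.isProbabilityMeasure_map (hmeas i).aemeasurable
  have hvec : Measurable fun ω i => f i ω := measurable_pi_lambda _ hmeas
  refine (Measure.pi_eq fun s hs => ?_).symm
  rw [Measure.map_apply hvec (MeasurableSet.univ_pi hs)]
  have hpre : (fun ω i => f i ω) ⁻¹' Set.univ.pi s = ⋂ i ∈ Finset.univ, f i ⁻¹' s i := by
    ext ω; simp [Set.mem_pi]
  rw [hpre, hind.measure_inter_preimage_eq_mul Finset.univ (fun i _ => hs i)]
  refine Finset.prod_congr rfl fun i _ => ?_
  rw [Measure.map_apply (hmeas i) (hs i)]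

lemma auxLFC_iIndepFun_castLE {Ω : Type*} [MeasurableSpace Ω] {Q : Measure Ω}
    {m m0 : ℕ} (h : m0 ≤ m) {r : Ω → Fin m → ℝ}
    (hind : iIndepFun (fun (i : Fin m) ω => r ω i) Q) :
    iIndepFun (fun (i : Fin m0) ω => r ω (Fin.castLE h i)) Q := by
  classical
  rw [iIndepFun_iff_measure_inter_preimage_eq_mul] at hind ⊢
  intro S sets hsets
  set g : Fin m0 → Fin m := Fin.castLE h with hg
  have hginj : Function.Injective g := Fin.castLE_injective h
  set sets' : Fin m → Set ℝ := fun j =>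
    if hj : (j : ℕ) < m0 then sets ⟨j, hj⟩ else Set.univ with hsets'
  have hsets'g : ∀ i : Fin m0, sets' (g i) = sets i := by
    intro i
    have hlt : ((g i : Fin m) : ℕ) < m0 := i.isLt
    have : (⟨((g i : Fin m) : ℕ), hlt⟩ : Fin m0) = i := Fin.ext rfl
    simp only [hsets', dif_pos hlt, this]
  have key := hind (S.image g) (sets := sets') (fun j hj => by
    obtain ⟨i, hi, rfl⟩ := Finset.mem_image.1 hj
    rw [hsets'g]
    exact hsets i hi)
  calc Q (⋂ i ∈ S, (fun ω => r ω (g i)) ⁻¹' sets i)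
      = Q (⋂ j ∈ S.image g, (fun ω => r ω j) ⁻¹' sets' j) := by
        rw [Finset.set_biInter_finset_image]
        congr 1
        exact Set.iInter₂_congr fun i _ => by rw [hsets'g]
    _ = ∏ j ∈ S.image g, Q ((fun ω => r ω j) ⁻¹' sets' j) := key
    _ = ∏ i ∈ S, Q ((fun ω => r ω (g i)) ⁻¹' sets i) := by
        rw [Finset.prod_image fun a _ b _ hab => hginj hab]
        exact Finset.prod_congr rfl fun i _ => by rw [hsets'g]

lemma auxLFC_integral_conv {Ω'' : Type*} [MeasurableSpace Ω''] (R : Measure Ω'')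
    [IsProbabilityMeasure R] (φ : ℕ → ℝ) (hφ : Monotone φ) (m : ℕ) (V : Ω'' → ℕ)
    (hV : Measurable V) (hVle : ∀ ω, V ω ≤ m) :
    ∫ ω, φ (V ω) ∂ R = (∫⁻ ω, ENNReal.ofReal (φ (V ω) - φ 0) ∂ R).toReal + φ 0 := by
  have hmeasφ : Measurable fun ω => φ (V ω) - φ 0 :=
    (measurable_from_nat (f := fun k => φ k - φ 0)).comp hV
  have hnn : 0 ≤ᵐ[R] fun ω => φ (V ω) - φ 0 :=
    Filter.Eventually.of_forall fun ω => sub_nonneg.2 (hφ (Nat.zero_le _))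
  have h1 : ∫ ω, (φ (V ω) - φ 0) ∂ R
      = (∫⁻ ω, ENNReal.ofReal (φ (V ω) - φ 0) ∂ R).toReal := by
    rw [integral_eq_lintegral_of_nonneg_ae hnn hmeasφ.aestronglyMeasurable]
  have hint : Integrable (fun ω => φ (V ω) - φ 0) R := by
    refine Integrable.mono' (integrable_const (φ m - φ 0))
      hmeasφ.aestronglyMeasurable (Filter.Eventually.of_forall fun ω => ?_)
    rw [Real.norm_eq_abs, abs_of_nonneg (sub_nonneg.2 (hφ (Nat.zero_le _)))]
    exact sub_le_sub_right (hφ (hVle ω)) _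
  calc ∫ ω, φ (V ω) ∂ R = ∫ ω, ((φ (V ω) - φ 0) + φ 0) ∂ R := by
        refine integral_congr_ae (Filter.Eventually.of_forall fun ω => ?_)
        ring
    _ = (∫ ω, (φ (V ω) - φ 0) ∂ R) + φ 0 := by
        rw [integral_add hint (integrable_const _), integral_const, probReal_univ,
          smul_eq_mul, one_mul]
    _ = (∫⁻ ω, ENNReal.ofReal (φ (V ω) - φ 0) ∂ R).toReal + φ 0 := by rw [h1]

end AuxLFC

/-- Lemma: the Dirac-uniform configuration `DU(m, m0)` is least favorable for any
nondecreasing criterion `φ` of the number of type I errors of a threshold-based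
procedure whose threshold `t*` is nonincreasing in each p-value, when the p-values of
true nulls are independent and stochastically lower bounded by a uniform variable. -/
theorem diracUniform_least_favorable_monotone_criterion
    (m m0 : ℕ) (hm : 1 ≤ m) (hm0 : m0 ≤ m)
    {Ω Ω' : Type*} [MeasurableSpace Ω] [MeasurableSpace Ω']
    (P : Measure Ω) [IsProbabilityMeasure P] (Q : Measure Ω')
    (p : Ω → Fin m → ℝ) (r : Ω' → Fin m → ℝ)
    (hmeas : ∀ i, Measurable fun ω => p ω i)
    (hrange : ∀ ω i, p ω i ∈ Set.Icc (0:ℝ) 1)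
    (hindep : iIndepFun
      (fun (i : Fin m0) ω => p ω (Fin.castLE hm0 i)) P)
    (hnull : ∀ i : Fin m, (i : ℕ) < m0 → ∀ x ∈ Set.Icc (0:ℝ) 1,
      P {ω | p ω i ≤ x} ≤ ENNReal.ofReal x)
    (tstar : (Fin m → ℝ) → ℝ) (htmeas : Measurable tstar)
    (htanti : ∀ u v : Fin m → ℝ, (∀ i, u i ≤ v i) → tstar v ≤ tstar u)
    (φ : ℕ → ℝ) (hφ : Monotone φ)
    (hQ : IsFM Q m m0 (fun _ => 1) r) :
    ∫ ω, φ (numLeNull m0 (p ω) (tstar (p ω))) ∂P ≤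
      ∫ ω, φ (numLeNull m0 (r ω) (tstar (r ω))) ∂Q := by
  classical
  obtain ⟨hQprob, hrmeas, hrindep, hrrange, hrnull, hralt⟩ := hQ
  haveI := hQprob
  -- notation
  set res : (Fin m → ℝ) → (Fin m0 → ℝ) := fun u i => u (Fin.castLE hm0 i) with hresdef
  set ext : (Fin m0 → ℝ) → (Fin m → ℝ) :=
    fun q i => if h : (i : ℕ) < m0 then q ⟨i, h⟩ else 0 with hextdef
  have hcast : ∀ (i : Fin m) (h : (i : ℕ) < m0), Fin.castLE hm0 ⟨(i : ℕ), h⟩ = i :=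
    fun i h => Fin.ext rfl
  have hext_pos : ∀ (q : Fin m0 → ℝ) (i : Fin m) (h : (i : ℕ) < m0),
      ext q i = q ⟨i, h⟩ := fun q i h => dif_pos h
  have hext_neg : ∀ (q : Fin m0 → ℝ) (i : Fin m), ¬ (i : ℕ) < m0 →
      ext q i = 0 := fun q i h => dif_neg h
  have hext_meas : Measurable ext := by
    apply measurable_pi_lambda
    intro i
    by_cases h : (i : ℕ) < m0
    · have : (fun q : Fin m0 → ℝ => ext q i) = fun q => q ⟨i, h⟩ := by
        funext q; exact hext_pos q i h
      rw [this]; exact measurable_pi_apply _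
    · have : (fun q : Fin m0 → ℝ => ext q i) = fun _ => (0:ℝ) := by
        funext q; exact hext_neg q i h
      rw [this]; exact measurable_const
  set K : (Fin m0 → ℝ) → ℕ := fun q => numLeNull m0 (ext q) (tstar (ext q)) with hKdef
  have hKmeas : Measurable K :=
    auxLFC_measurable_numLeNull hext_meas (htmeas.comp hext_meas)
  have hKanti : ∀ q q' : Fin m0 → ℝ, q ≤ q' → K q' ≤ K q := by
    intro q q' hqq
    have hee : ∀ i, ext q i ≤ ext q' i := by
      intro i
      by_cases h : (i : ℕ) < m0
      · rw [hext_pos q i h, hext_pos q' i h]; exact hqq _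
      · rw [hext_neg q i h, hext_neg q' i h]
    refine auxLFC_numLeNull_mono (fun i hi => hee i) (htanti _ _ hee)
  have hKle : ∀ q, K q ≤ m := fun q => auxLFC_numLeNull_le _ _
  -- the monotone nonnegative transform of φ
  set ψ : ℕ → ℝ≥0∞ := fun k => ENNReal.ofReal (φ k - φ 0) with hψdef
  have hψmono : Monotone ψ := fun a b hab =>
    ENNReal.ofReal_le_ofReal (by have := hφ hab; linarith)
  -- pointwise inequality on the P side
  have hpoint : ∀ ω, numLeNull m0 (p ω) (tstar (p ω)) ≤ K (res (p ω)) := by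
    intro ω
    have h1 : ∀ i, ext (res (p ω)) i ≤ p ω i := by
      intro i
      by_cases h : (i : ℕ) < m0
      · rw [hext_pos _ i h]
        show p ω (Fin.castLE hm0 ⟨(i : ℕ), h⟩) ≤ p ω i
        rw [hcast i h]
      · rw [hext_neg _ i h]; exact (hrange ω i).1
    refine auxLFC_numLeNull_mono (fun i hi => h1 i) (htanti _ _ h1)
  -- a.e. equality on the Q side
  have hae : ∀ᵐ ω ∂Q, numLeNull m0 (r ω) (tstar (r ω)) = K (res (r ω)) := by
    have hzero : ∀ᵐ ω ∂Q, ∀ i : Fin m, m0 ≤ (i : ℕ) → r ω i = 0 := by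
      rw [ae_all_iff]
      intro i
      by_cases hi : m0 ≤ (i : ℕ)
      · have h0 : Q {ω | r ω i ≤ 0} = 1 := by
          have := hralt i hi 0 ⟨le_refl (0:ℝ), zero_le_one⟩
          simpa using this
        have hms : MeasurableSet {ω | r ω i ≤ 0} :=
          measurableSet_le (hrmeas i) measurable_const
        have hc : Q {ω | r ω i ≤ 0}ᶜ = 0 := by
          rw [measure_compl hms (measure_ne_top _ _), h0, measure_univ, tsub_self]
        have hle : ∀ᵐ ω ∂Q, r ω i ≤ 0 := by
          rw [ae_iff]
          convert hc using 2
          ext; simp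
        filter_upwards [hle] with ω hω _
        exact le_antisymm hω (hrrange ω i).1
      · exact Filter.Eventually.of_forall fun ω h => absurd h hi
    filter_upwards [hzero] with ω hω
    have hexteq : ext (res (r ω)) = r ω := by
      funext i
      by_cases h : (i : ℕ) < m0
      · rw [hext_pos _ i h]
        show r ω (Fin.castLE hm0 ⟨(i : ℕ), h⟩) = r ω i
        rw [hcast i h]
      · rw [hext_neg _ i h, (hω i (le_of_not_gt h))]
    show numLeNull m0 (r ω) (tstar (r ω)) = numLeNull m0 (ext (res (r ω))) (tstar (ext (res (r ω))))
    rw [hexteq]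
  -- measurability of the counts
  have hpm : Measurable p := measurable_pi_lambda _ hmeas
  have hrm : Measurable r := measurable_pi_lambda _ hrmeas
  have hVPm : Measurable fun ω => numLeNull m0 (p ω) (tstar (p ω)) :=
    auxLFC_measurable_numLeNull hpm (htmeas.comp hpm)
  have hVQm : Measurable fun ω => numLeNull m0 (r ω) (tstar (r ω)) :=
    auxLFC_measurable_numLeNull hrm (htmeas.comp hrm)
  have hVPle : ∀ ω, numLeNull m0 (p ω) (tstar (p ω)) ≤ m :=
    fun ω => auxLFC_numLeNull_le _ _
  have hVQle : ∀ ω, numLeNull m0 (r ω) (tstar (r ω)) ≤ m :=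
    fun ω => auxLFC_numLeNull_le _ _
  -- the laws of the null coordinates
  set μfam : Fin m0 → Measure ℝ :=
    fun i => P.map fun ω => p ω (Fin.castLE hm0 i) with hμfam
  set νfam : Fin m0 → Measure ℝ :=
    fun i => Q.map fun ω => r ω (Fin.castLE hm0 i) with hνfam
  haveI hμprob : ∀ i, IsProbabilityMeasure (μfam i) := fun i =>
    Measure.isProbabilityMeasure_map (hmeas _).aemeasurable
  haveI hνprob : ∀ i, IsProbabilityMeasure (νfam i) := fun i =>
    Measure.isProbabilityMeasure_map (hrmeas _).aemeasurable
  have hIic : ∀ (i : Fin m0) (c : ℝ), μfam i (Set.Iic c) ≤ νfam i (Set.Iic c) := by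
    intro i c
    have hμap : μfam i (Set.Iic c) = P {ω | p ω (Fin.castLE hm0 i) ≤ c} := by
      rw [hμfam, Measure.map_apply (hmeas _) measurableSet_Iic]; rfl
    have hνap : νfam i (Set.Iic c) = Q {ω | r ω (Fin.castLE hm0 i) ≤ c} := by
      rw [hνfam, Measure.map_apply (hrmeas _) measurableSet_Iic]; rfl
    have hilt : ((Fin.castLE hm0 i : Fin m) : ℕ) < m0 := i.isLt
    by_cases hc0 : c < 0
    · have hempty : {ω | p ω (Fin.castLE hm0 i) ≤ c} = ∅ := by
        ext ω
        simp only [Set.mem_setOf_eq, Set.mem_empty_iff_false, iff_false, not_le]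
        exact lt_of_lt_of_le hc0 (hrange ω _).1
      rw [hμap, hempty, measure_empty]
      exact zero_le
    · push_neg at hc0
      by_cases hc1 : c ≤ 1
      · rw [hμap, hνap, hrnull _ hilt c ⟨hc0, hc1⟩]
        exact hnull _ hilt c ⟨hc0, hc1⟩
      · push_neg at hc1
        have hν1 : νfam i (Set.Iic c) = 1 := by
          refine le_antisymm prob_le_one ?_
          rw [hνap]
          have h1 : Q {ω | r ω (Fin.castLE hm0 i) ≤ 1} = 1 := by
            have := hrnull _ hilt 1 ⟨zero_le_one, le_refl (1:ℝ)⟩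
            simpa using this
          rw [← h1]
          exact measure_mono fun ω hω => le_trans hω hc1.le
        rw [hν1]
        exact prob_le_one
  have hmapP : P.map (fun ω (i : Fin m0) => p ω (Fin.castLE hm0 i))
      = Measure.pi μfam :=
    auxLFC_map_eq_pi P (fun i ω => p ω (Fin.castLE hm0 i)) (fun i => hmeas _) hindep
  have hmapQ : Q.map (fun ω (i : Fin m0) => r ω (Fin.castLE hm0 i))
      = Measure.pi νfam :=
    auxLFC_map_eq_pi Q (fun i ω => r ω (Fin.castLE hm0 i)) (fun i => hrmeas _)
      (auxLFC_iIndepFun_castLE hm0 hrindep)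
  have hresPm : Measurable fun ω => res (p ω) :=
    measurable_pi_lambda _ fun i => hmeas _
  have hresQm : Measurable fun ω => res (r ω) :=
    measurable_pi_lambda _ fun i => hrmeas _
  have hψKm : Measurable fun q => ψ (K q) := (measurable_from_nat (f := ψ)).comp hKmeas
  -- the central chain of inequalities on lower integrals
  have hmain : ∫⁻ ω, ψ (numLeNull m0 (p ω) (tstar (p ω))) ∂P
      ≤ ∫⁻ ω, ψ (numLeNull m0 (r ω) (tstar (r ω))) ∂Q := by
    calc ∫⁻ ω, ψ (numLeNull m0 (p ω) (tstar (p ω))) ∂P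
        ≤ ∫⁻ ω, ψ (K (res (p ω))) ∂P := lintegral_mono fun ω => hψmono (hpoint ω)
      _ = ∫⁻ q, ψ (K q) ∂Measure.pi μfam := by
          rw [← hmapP]
          exact (lintegral_map hψKm hresPm).symm
      _ ≤ ∫⁻ q, ψ (K q) ∂Measure.pi νfam := by
          refine auxLFC_pi_lintegral_antitone_le m0 μfam νfam hμprob hνprob hIic
            (fun q => ψ (K q)) (ψ m) ENNReal.ofReal_ne_top hψKm ?_ ?_
          · intro q q' hqq
            exact hψmono (hKanti q q' hqq)
          · intro q
            exact hψmono (hKle q)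
      _ = ∫⁻ ω, ψ (K (res (r ω))) ∂Q := by
          rw [← hmapQ]
          exact lintegral_map hψKm hresQm
      _ = ∫⁻ ω, ψ (numLeNull m0 (r ω) (tstar (r ω))) ∂Q := by
          refine lintegral_congr_ae ?_
          filter_upwards [hae] with ω hω
          rw [hω]
  -- conclusion
  have e1 : ∫ ω, φ (numLeNull m0 (p ω) (tstar (p ω))) ∂P
      = (∫⁻ ω, ψ (numLeNull m0 (p ω) (tstar (p ω))) ∂P).toReal + φ 0 :=
    auxLFC_integral_conv P φ hφ m (fun ω => numLeNull m0 (p ω) (tstar (p ω))) hVPm hVPle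
  have e2 : ∫ ω, φ (numLeNull m0 (r ω) (tstar (r ω))) ∂Q
      = (∫⁻ ω, ψ (numLeNull m0 (r ω) (tstar (r ω))) ∂Q).toReal + φ 0 :=
    auxLFC_integral_conv Q φ hφ m (fun ω => numLeNull m0 (r ω) (tstar (r ω))) hVQm hVQle
  rw [e1, e2]
  have hfin : ∫⁻ ω, ψ (numLeNull m0 (r ω) (tstar (r ω))) ∂Q ≠ ⊤ := by
    refine ne_top_of_le_ne_top (b := ψ m) ENNReal.ofReal_ne_top ?_
    calc ∫⁻ ω, ψ (numLeNull m0 (r ω) (tstar (r ω))) ∂Q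
        ≤ ∫⁻ _, ψ m ∂Q := lintegral_mono fun ω => hψmono (hVQle ω)
      _ = ψ m := by simp
  exact add_le_add_left (ENNReal.toReal_mono hfin hmain) _
end
end

section
/- Let ρ : [0,1] → [0,1] be continuous and nondecreasing, and let t_0 ∈ [0,1]. (a) For every nondecreasing right-continuous G : [0,1] → [0,1], the minimum (respectively maximum) in the definition of U(t_0,G) is attained and U(t_0,G) is a fixed point of G∘ρ, i.e., G(ρ(U(t_0,G))) = U(t_0,G). (b) If G, G' : [0,1] → [0,1] are nondecreasing right-continuous functions with G(x) ≥ G'(x) for all x ∈ [0,1], then U(t_0,G) ≥ U(t_0,G'). -/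
open MeasureTheory ProbabilityTheory Filter
open scoped ENNReal

noncomputable section

private lemma ufix_aux1 {H : ℝ → ℝ} (hmono : MonotoneOn H (Set.Icc 0 1))
    (hmap : ∀ x ∈ Set.Icc (0:ℝ) 1, H x ∈ Set.Icc (0:ℝ) 1)
    {t0 : ℝ} (ht0 : t0 ∈ Set.Icc (0:ℝ) 1) (h : t0 ≤ H t0) :
    sInf {u | u ∈ Set.Icc t0 1 ∧ H u ≤ u} ∈ {u | u ∈ Set.Icc t0 1 ∧ H u ≤ u} ∧
      H (sInf {u | u ∈ Set.Icc t0 1 ∧ H u ≤ u}) = sInf {u | u ∈ Set.Icc t0 1 ∧ H u ≤ u} := by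
  set S := {u | u ∈ Set.Icc t0 1 ∧ H u ≤ u} with hSdef
  have h1S : (1:ℝ) ∈ S := ⟨⟨ht0.2, le_refl 1⟩, (hmap 1 ⟨zero_le_one, le_refl 1⟩).2⟩
  have hne : S.Nonempty := ⟨1, h1S⟩
  have hbdd : BddBelow S := ⟨t0, fun u hu => hu.1.1⟩
  set U := sInf S with hUdef
  have hUt0 : t0 ≤ U := le_csInf hne fun u hu => hu.1.1
  have hU1 : U ≤ 1 := csInf_le hbdd h1S
  have hUIcc : U ∈ Set.Icc (0:ℝ) 1 := ⟨ht0.1.trans hUt0, hU1⟩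
  have hHU : H U ≤ U := by
    apply le_csInf hne
    intro u hu
    exact (hmono hUIcc ⟨ht0.1.trans hu.1.1, hu.1.2⟩ (csInf_le hbdd hu)).trans hu.2
  have hUH : U ≤ H U := by
    rcases eq_or_lt_of_le hUt0 with heq | hlt
    · calc U = t0 := heq.symm
        _ ≤ H t0 := h
        _ ≤ H U := hmono ht0 hUIcc hUt0
    · by_contra h'
      push_neg at h'
      have hc0 : t0 ≤ H U := h.trans (hmono ht0 hUIcc hUt0)
      set u := (H U + U) / 2 with hudef
      have hu1 : H U < u := by rw [hudef]; linarith
      have hu2 : u < U := by rw [hudef]; linarith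
      have huIcc : u ∈ Set.Icc t0 1 := ⟨hc0.trans hu1.le, hu2.le.trans hU1⟩
      have hnot : u ∉ S := fun hmem => absurd (csInf_le hbdd hmem) (not_le.mpr hu2)
      have h3 : u < H u := by
        by_contra h2
        push_neg at h2
        exact hnot ⟨huIcc, h2⟩
      have h4 : H u ≤ H U :=
        hmono ⟨ht0.1.trans huIcc.1, huIcc.2⟩ hUIcc hu2.le
      linarith
  exact ⟨⟨⟨hUt0, hU1⟩, hHU⟩, le_antisymm hHU hUH⟩

private lemma ufix_aux2 {H : ℝ → ℝ} (hmono : MonotoneOn H (Set.Icc 0 1))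
    (hmap : ∀ x ∈ Set.Icc (0:ℝ) 1, H x ∈ Set.Icc (0:ℝ) 1)
    {t0 : ℝ} (ht0 : t0 ∈ Set.Icc (0:ℝ) 1) (h : H t0 < t0) :
    sSup {u | u ∈ Set.Icc 0 t0 ∧ u ≤ H u} ∈ {u | u ∈ Set.Icc 0 t0 ∧ u ≤ H u} ∧
      H (sSup {u | u ∈ Set.Icc 0 t0 ∧ u ≤ H u}) = sSup {u | u ∈ Set.Icc 0 t0 ∧ u ≤ H u} := by
  set S := {u | u ∈ Set.Icc 0 t0 ∧ u ≤ H u} with hSdef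
  have h0S : (0:ℝ) ∈ S := ⟨⟨le_refl 0, ht0.1⟩, (hmap 0 ⟨le_refl 0, zero_le_one⟩).1⟩
  have hne : S.Nonempty := ⟨0, h0S⟩
  have hbdd : BddAbove S := ⟨t0, fun u hu => hu.1.2⟩
  set U := sSup S with hUdef
  have hU0 : 0 ≤ U := le_csSup hbdd h0S
  have hUt0 : U ≤ t0 := csSup_le hne fun u hu => hu.1.2
  have hUIcc : U ∈ Set.Icc (0:ℝ) 1 := ⟨hU0, hUt0.trans ht0.2⟩
  have hUH : U ≤ H U := by
    apply csSup_le hne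
    intro u hu
    exact hu.2.trans (hmono ⟨hu.1.1, hu.1.2.trans ht0.2⟩ hUIcc (le_csSup hbdd hu))
  have hHU : H U ≤ U := by
    have hlt : U < t0 := by
      rcases eq_or_lt_of_le hUt0 with heq | hlt
      · exfalso; rw [heq] at hUH; linarith
      · exact hlt
    by_contra h'
    push_neg at h'
    have hct0 : H U < t0 := lt_of_le_of_lt (hmono hUIcc ht0 hUt0) h
    set u := (U + H U) / 2 with hudef
    have hu1 : U < u := by rw [hudef]; linarith
    have hu2 : u < H U := by rw [hudef]; linarith
    have huIcc : u ∈ Set.Icc 0 t0 := ⟨hU0.trans hu1.le, (hu2.trans hct0).le⟩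
    have hnot : u ∉ S := fun hmem => absurd (le_csSup hbdd hmem) (not_le.mpr hu1)
    have h3 : H u < u := by
      by_contra h2
      push_neg at h2
      exact hnot ⟨huIcc, h2⟩
    have h4 : H U ≤ H u := hmono hUIcc ⟨huIcc.1, huIcc.2.trans ht0.2⟩ hu1.le
    linarith
  exact ⟨⟨⟨hU0, hUt0⟩, hUH⟩, le_antisymm hHU hUH⟩

/-- Properties of `𝒰(t0, G)`: (a) for a nondecreasing right-continuous `G`, the
minimum (resp. maximum) defining `𝒰(t0, G)` is attained and `𝒰(t0, G)` is a fixed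
point of `G ∘ ρ`; (b) `𝒰(t0, ·)` is monotone: if `G' ≤ G` pointwise on `[0,1]`,
then `𝒰(t0, G') ≤ 𝒰(t0, G)`. -/
theorem ufix_attained_fixedPoint_monotone
    (ρ : ℝ → ℝ) (hρcont : ContinuousOn ρ (Set.Icc 0 1))
    (hρmono : MonotoneOn ρ (Set.Icc 0 1))
    (hρmap : ∀ x ∈ Set.Icc (0:ℝ) 1, ρ x ∈ Set.Icc (0:ℝ) 1)
    (t0 : ℝ) (ht0 : t0 ∈ Set.Icc (0:ℝ) 1)
    (G G' : ℝ → ℝ)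
    (hGmono : MonotoneOn G (Set.Icc 0 1))
    (hGmap : ∀ x ∈ Set.Icc (0:ℝ) 1, G x ∈ Set.Icc (0:ℝ) 1)
    (hGrc : ∀ x ∈ Set.Ico (0:ℝ) 1, ContinuousWithinAt G (Set.Ici x) x)
    (hG'mono : MonotoneOn G' (Set.Icc 0 1))
    (hG'map : ∀ x ∈ Set.Icc (0:ℝ) 1, G' x ∈ Set.Icc (0:ℝ) 1)
    (hG'rc : ∀ x ∈ Set.Ico (0:ℝ) 1, ContinuousWithinAt G' (Set.Ici x) x) :
    ((t0 ≤ G (ρ t0) →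
        Ufix ρ t0 G ∈ {u | u ∈ Set.Icc t0 1 ∧ G (ρ u) ≤ u}) ∧
      (G (ρ t0) < t0 →
        Ufix ρ t0 G ∈ {u | u ∈ Set.Icc 0 t0 ∧ u ≤ G (ρ u)}) ∧
      G (ρ (Ufix ρ t0 G)) = Ufix ρ t0 G) ∧
    ((∀ x ∈ Set.Icc (0:ℝ) 1, G' x ≤ G x) → Ufix ρ t0 G' ≤ Ufix ρ t0 G) := by
  have hHmono : MonotoneOn (fun u => G (ρ u)) (Set.Icc 0 1) := fun a ha b hb hab =>
    hGmono (hρmap a ha) (hρmap b hb) (hρmono ha hb hab)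
  have hHmap : ∀ x ∈ Set.Icc (0:ℝ) 1, G (ρ x) ∈ Set.Icc (0:ℝ) 1 := fun x hx =>
    hGmap _ (hρmap x hx)
  have hH'mono : MonotoneOn (fun u => G' (ρ u)) (Set.Icc 0 1) := fun a ha b hb hab =>
    hG'mono (hρmap a ha) (hρmap b hb) (hρmono ha hb hab)
  have hH'map : ∀ x ∈ Set.Icc (0:ℝ) 1, G' (ρ x) ∈ Set.Icc (0:ℝ) 1 := fun x hx =>
    hG'map _ (hρmap x hx)
  constructor
  · refine ⟨?_, ?_, ?_⟩
    · intro h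
      rw [Ufix, if_pos h]
      exact (ufix_aux1 hHmono hHmap ht0 h).1
    · intro h
      rw [Ufix, if_neg (not_le.mpr h)]
      exact (ufix_aux2 hHmono hHmap ht0 h).1
    · by_cases h : t0 ≤ G (ρ t0)
      · rw [Ufix, if_pos h]
        exact (ufix_aux1 hHmono hHmap ht0 h).2
      · rw [Ufix, if_neg h]
        exact (ufix_aux2 hHmono hHmap ht0 (not_le.mp h)).2
  · intro hle
    have hle' : ∀ u ∈ Set.Icc (0:ℝ) 1, G' (ρ u) ≤ G (ρ u) := fun u hu => hle _ (hρmap u hu)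
    by_cases h' : t0 ≤ G' (ρ t0)
    · have h : t0 ≤ G (ρ t0) := h'.trans (hle' t0 ht0)
      rw [Ufix, Ufix, if_pos h, if_pos h']
      refine csInf_le_csInf ⟨t0, fun u hu => hu.1.1⟩
        ⟨1, ⟨⟨ht0.2, le_refl 1⟩, (hHmap 1 ⟨zero_le_one, le_refl 1⟩).2⟩⟩ ?_
      intro u hu
      exact ⟨hu.1, (hle' u ⟨ht0.1.trans hu.1.1, hu.1.2⟩).trans hu.2⟩
    · by_cases h : t0 ≤ G (ρ t0)
      · rw [Ufix, Ufix, if_pos h, if_neg h']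
        calc sSup {u | u ∈ Set.Icc 0 t0 ∧ u ≤ G' (ρ u)}
            ≤ t0 := csSup_le ⟨0, ⟨⟨le_refl 0, ht0.1⟩,
                (hH'map 0 ⟨le_refl 0, zero_le_one⟩).1⟩⟩ fun u hu => hu.1.2
          _ ≤ sInf {u | u ∈ Set.Icc t0 1 ∧ G (ρ u) ≤ u} :=
              le_csInf ⟨1, ⟨⟨ht0.2, le_refl 1⟩, (hHmap 1 ⟨zero_le_one, le_refl 1⟩).2⟩⟩
                fun u hu => hu.1.1
      · rw [Ufix, Ufix, if_neg h, if_neg h']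
        refine csSup_le_csSup ⟨t0, fun u hu => hu.1.2⟩
          ⟨0, ⟨⟨le_refl 0, ht0.1⟩, (hH'map 0 ⟨le_refl 0, zero_le_one⟩).1⟩⟩ ?_
        intro u hu
        exact ⟨hu.1, hu.2.trans (hle' u ⟨hu.1.1, hu.1.2.trans ht0.2⟩)⟩
end
end

section
/- Let α ∈ (0,1), ρ(x) = αx, ζ ∈ (0,1), δ ∈ (0,1), and G^{DU}_ζ(x) = (1−ζ) + ζx. Then for every t_0 ∈ [0,1]: u⁺_δ := U(t_0, (G^{DU}_ζ + δ) ∧ 1) = min( (1−ζ+δ)/(1−αζ), 1 ) and u⁻_δ := U(t_0, (G^{DU}_ζ − δ) ∨ 0) = max( (1−ζ−δ)/(1−αζ), 0 ), and consequently (ρ(u⁺_δ) − ρ(u⁻_δ))/u⁺_δ ≤ 2αδ/(1−ζ+δ). -/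
open MeasureTheory ProbabilityTheory Filter
open scoped ENNReal

noncomputable section

lemma Ufix_eq_of_iff (ρ G : ℝ → ℝ) (t0 us : ℝ) (h0 : 0 ≤ us) (h1 : us ≤ 1)
    (ht0 : 0 ≤ t0) (ht1 : t0 ≤ 1)
    (hle : ∀ u, G (ρ u) ≤ u ↔ us ≤ u) (hge : ∀ u, u ≤ G (ρ u) ↔ u ≤ us) :
    Ufix ρ t0 G = us := by
  unfold Ufix
  by_cases h : t0 ≤ G (ρ t0)
  · rw [if_pos h]
    have hts : t0 ≤ us := (hge t0).1 h
    have hset : {u | u ∈ Set.Icc t0 1 ∧ G (ρ u) ≤ u} = Set.Icc us 1 := by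
      ext u
      simp only [Set.mem_setOf_eq, Set.mem_Icc, hle u]
      constructor
      · rintro ⟨⟨_, h2⟩, h3⟩; exact ⟨h3, h2⟩
      · rintro ⟨h3, h2⟩; exact ⟨⟨hts.trans h3, h2⟩, h3⟩
    rw [hset, csInf_Icc h1]
  · rw [if_neg h]
    have hts : us ≤ t0 := by
      by_contra hc
      push_neg at hc
      exact h ((hge t0).2 hc.le)
    have hset : {u | u ∈ Set.Icc 0 t0 ∧ u ≤ G (ρ u)} = Set.Icc 0 us := by
      ext u
      simp only [Set.mem_setOf_eq, Set.mem_Icc, hge u]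
      constructor
      · rintro ⟨⟨h2, _⟩, h3⟩; exact ⟨h2, h3⟩
      · rintro ⟨h2, h3⟩; exact ⟨⟨h2, h3.trans hts⟩, h3⟩
    rw [hset, csSup_Icc h0]

/-- Explicit computation of `u⁺_δ` and `u⁻_δ` for the linear critical value function
`ρ(x) = αx`, and the resulting bound `(ρ(u⁺_δ) - ρ(u⁻_δ))/u⁺_δ ≤ 2αδ/(1-ζ+δ)`. -/
theorem uPlus_uMinus_linear
    (α ζ δ : ℝ) (hα : α ∈ Set.Ioo (0:ℝ) 1) (hζ : ζ ∈ Set.Ioo (0:ℝ) 1)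
    (hδ : δ ∈ Set.Ioo (0:ℝ) 1) (t0 : ℝ) (ht0 : t0 ∈ Set.Icc (0:ℝ) 1) :
    uPlusDU (fun x => α * x) t0 ζ δ = min ((1 - ζ + δ) / (1 - α * ζ)) 1 ∧
    uMinusDU (fun x => α * x) t0 ζ δ = max ((1 - ζ - δ) / (1 - α * ζ)) 0 ∧
    (α * uPlusDU (fun x => α * x) t0 ζ δ - α * uMinusDU (fun x => α * x) t0 ζ δ) /
        uPlusDU (fun x => α * x) t0 ζ δ ≤
      2 * α * δ / (1 - ζ + δ) := by
  obtain ⟨hα0, hα1⟩ := hα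
  obtain ⟨hζ0, hζ1⟩ := hζ
  obtain ⟨hδ0, hδ1⟩ := hδ
  obtain ⟨ht00, ht01⟩ := ht0
  have hA : (0:ℝ) < 1 - α * ζ := by nlinarith
  have hD : (0:ℝ) < 1 - ζ + δ := by linarith
  set us := (1 - ζ + δ) / (1 - α * ζ) with hus
  set vs := (1 - ζ - δ) / (1 - α * ζ) with hvs
  have hus0 : 0 < us := div_pos hD hA
  have hvs1 : vs < 1 := by
    rw [hvs, div_lt_one hA]; nlinarith
  have key1 : ∀ u : ℝ, ((1 - ζ) + ζ * (α * u) + δ ≤ u) ↔ (us ≤ u) := by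
    intro u
    rw [hus, div_le_iff₀ hA]
    constructor <;> intro h <;> nlinarith
  have key2 : ∀ u : ℝ, ((1 - ζ) + ζ * (α * u) - δ ≤ u) ↔ (vs ≤ u) := by
    intro u
    rw [hvs, div_le_iff₀ hA]
    constructor <;> intro h <;> nlinarith
  have key1' : ∀ u : ℝ, (u ≤ (1 - ζ) + ζ * (α * u) + δ) ↔ (u ≤ us) := by
    intro u
    rw [hus, le_div_iff₀ hA]
    constructor <;> intro h <;> nlinarith
  have key2' : ∀ u : ℝ, (u ≤ (1 - ζ) + ζ * (α * u) - δ) ↔ (u ≤ vs) := by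
    intro u
    rw [hvs, le_div_iff₀ hA]
    constructor <;> intro h <;> nlinarith
  have hplus : uPlusDU (fun x => α * x) t0 ζ δ = min us 1 := by
    apply Ufix_eq_of_iff _ _ _ _ (le_min hus0.le zero_le_one) (min_le_right _ _) ht00 ht01
    · intro u
      simp only [min_le_iff, key1 u]
    · intro u
      simp only [le_min_iff, key1' u]
  have hminus : uMinusDU (fun x => α * x) t0 ζ δ = max vs 0 := by
    apply Ufix_eq_of_iff _ _ _ _ (le_max_right _ _) (max_le hvs1.le zero_le_one) ht00 ht01
    · intro u
      simp only [max_le_iff, key2 u]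
    · intro u
      simp only [le_max_iff, key2' u]
  refine ⟨hplus, hminus, ?_⟩
  rw [hplus, hminus]
  have hup : 0 < min us 1 := lt_min hus0 one_pos
  rw [div_le_div_iff₀ hup hD]
  rcases le_or_gt us 1 with h1 | h1 <;> rcases le_or_gt vs 0 with h2 | h2
  · -- u⁺ = us, u⁻ = 0, and 1 - ζ ≤ δ
    rw [min_eq_left h1, max_eq_right h2]
    have h2' : 1 - ζ - δ ≤ 0 := by
      by_contra hc
      push_neg at hc
      have : 0 < vs := div_pos hc hA
      linarith
    have : 0 < α * us := mul_pos hα0 hus0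
    nlinarith
  · rw [min_eq_left h1, max_eq_left h2.le]
    have hv : vs * (1 - α * ζ) = 1 - ζ - δ := div_mul_cancel₀ _ hA.ne'
    have hu : us * (1 - α * ζ) = 1 - ζ + δ := div_mul_cancel₀ _ hA.ne'
    nlinarith
  · rw [min_eq_right h1.le, max_eq_right h2]
    have h2' : 1 - ζ - δ ≤ 0 := by
      by_contra hc
      push_neg at hc
      have : 0 < vs := div_pos hc hA
      linarith
    nlinarith
  · rw [min_eq_right h1.le, max_eq_left h2.le]
    have hv : vs * (1 - α * ζ) = 1 - ζ - δ := div_mul_cancel₀ _ hA.ne'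
    have hDA : 1 - α * ζ < 1 - ζ + δ := by
      by_contra hc
      push_neg at hc
      have : us ≤ 1 := by rw [hus, div_le_one hA]; linarith
      linarith
    have hvnn : 0 ≤ 1 - ζ - δ := by
      have : 0 ≤ vs * (1 - α * ζ) := mul_nonneg h2.le hA.le
      linarith [hv ▸ this]
    have hfact : 0 ≤ ((1 - ζ + δ) - (1 - α * ζ)) * (1 - ζ - δ) := by
      nlinarith
    nlinarith [mul_nonneg hα0.le hfact]
end
end

section
/- Let ρ : [0,1] → [0,1] be continuous and nondecreasing, t_k = ρ(k/m) for 1 ≤ k ≤ m, and λ ∈ {1,…,m}. Fix ζ ∈ (0,1), δ ∈ (0,1), and define G^{DU}_ζ(x) = (1−ζ) + ζx, u⁺_δ = U(λ/m, (G^{DU}_ζ + δ) ∧ 1) and u⁻_δ = U(λ/m, (G^{DU}_ζ − δ) ∨ 0). Let k ∈ {1,…,m} and let p_1,…,p_m ∈ [0,1] be such that p_i = 0 for all i > k. Let Ĝ_k(x) = k^{-1} Σ_{i=1}^{k} 1{p_i ≤ x}, and let ν ∈ [0,1] satisfy |k/m − ζ| ≤ ν. If sup_{x ∈ [0,1]}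 |Ĝ_k(x) − x| ≤ ζ^{-1}(δ − ν − 1/m), then the step-up-down index k̂ of order λ satisfies u⁻_δ ≤ k̂/m ≤ u⁺_δ. -/
open MeasureTheory ProbabilityTheory Filter
open scoped ENNReal

noncomputable section

/- ## Auxiliary lemmas -/

theorem aux_ncard_ge (m k : ℕ) (hk : k ≤ m) : {i : Fin m | k ≤ (i:ℕ)}.ncard = m - k := by
  rcases eq_or_lt_of_le hk with h | h
  · have e : {i : Fin m | k ≤ (i:ℕ)} = ∅ := by
      ext i; simp only [Set.mem_setOf_eq, Set.mem_empty_iff_false, iff_false]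
      have := i.isLt; omega
    rw [e]; simp [h]
  · have e : {i : Fin m | k ≤ (i:ℕ)} = Set.Ici (⟨k, h⟩ : Fin m) := by
      ext i; simp [Fin.le_def]
    rw [e, Set.ncard_eq_toFinset_card', Set.toFinset_Ici, Fin.card_Ici]

theorem aux_numLe_decomp {m : ℕ} (k : ℕ) (hk : k ≤ m) (p : Fin m → ℝ) (x : ℝ) (hx : 0 ≤ x)
    (hzero : ∀ i : Fin m, k ≤ (i : ℕ) → p i = 0) :
    numLe p x = numLeNull k p x + (m - k) := by
  have e : {i : Fin m | p i ≤ x}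
      = {i : Fin m | (i : ℕ) < k ∧ p i ≤ x} ∪ {i : Fin m | k ≤ (i:ℕ)} := by
    ext i
    simp only [Set.mem_setOf_eq, Set.mem_union]
    constructor
    · intro h
      rcases lt_or_ge (i : ℕ) k with h' | h'
      · exact Or.inl ⟨h', h⟩
      · exact Or.inr h'
    · rintro (⟨_, h⟩ | h)
      · exact h
      · rw [hzero i h]; exact hx
  have hdisj : Disjoint {i : Fin m | (i : ℕ) < k ∧ p i ≤ x} {i : Fin m | k ≤ (i:ℕ)} := by
    rw [Set.disjoint_left]
    rintro i ⟨h1, _⟩ h2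
    exact Nat.lt_irrefl _ (lt_of_lt_of_le h1 h2)
  rw [numLe, numLeNull, e, Set.ncard_union_eq hdisj (Set.toFinite _) (Set.toFinite _),
    aux_ncard_ge m k hk]

theorem aux_numLeNull_le {m : ℕ} (k : ℕ) (p : Fin m → ℝ) (x : ℝ) (hk : k ≤ m) :
    numLeNull k p x ≤ k := by
  have h1 : {i : Fin m | (i : ℕ) < k ∧ p i ≤ x} ⊆ {i : Fin m | (i:ℕ) < k} := fun i hi => hi.1
  have h2 := Set.ncard_le_ncard h1 (Set.toFinite _)
  refine h2.trans ?_
  rcases eq_or_lt_of_le hk with h | h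
  · have e : {i : Fin m | (i:ℕ) < k} = Set.univ := by
      ext i; simp only [Set.mem_setOf_eq, Set.mem_univ, iff_true]; have := i.isLt; omega
    rw [e, Set.ncard_univ]; simp [Nat.card_eq_fintype_card, h]
  · have e : {i : Fin m | (i:ℕ) < k} = Set.Iio (⟨k, h⟩ : Fin m) := by
      ext i; simp [Fin.lt_def]
    rw [e, Set.ncard_eq_toFinset_card', Set.toFinset_Iio, Fin.card_Iio]

theorem aux_numLe_bounds {m k : ℕ} (hm : 2 ≤ m) (hk1 : 1 ≤ k) (hk2 : k ≤ m)
    (p : Fin m → ℝ) (hzero : ∀ i : Fin m, k ≤ (i : ℕ) → p i = 0)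
    (ζ δ ν : ℝ) (hζ0 : 0 < ζ) (hν0 : 0 ≤ ν)
    (hkν : |(k : ℝ) / m - ζ| ≤ ν)
    (hclose : ∀ x ∈ Set.Icc (0:ℝ) 1,
      |(numLeNull k p x : ℝ) / k - x| ≤ ζ⁻¹ * (δ - ν - 1 / m))
    (x : ℝ) (hx : x ∈ Set.Icc (0:ℝ) 1) :
    (m:ℝ) * ((1-ζ) + ζ*x - δ) + 1 ≤ (numLe p x : ℝ) ∧
      (numLe p x : ℝ) ≤ (m:ℝ) * ((1-ζ) + ζ*x + δ) - 1 := by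
  have hM0 : (0:ℝ) < m := by positivity
  have hK0 : (0:ℝ) < k := by exact_mod_cast hk1
  have hcast : (numLe p x : ℝ) = (numLeNull k p x : ℝ) + ((m:ℝ) - k) := by
    rw [aux_numLe_decomp k hk2 p x hx.1 hzero]
    push_cast [Nat.cast_sub hk2]
    ring
  set a : ℝ := (numLeNull k p x : ℝ) with ha
  have ha0 : 0 ≤ a := by positivity
  have haK : a ≤ (k:ℝ) := by rw [ha]; exact_mod_cast aux_numLeNull_le k p x hk2
  have key : a + ((m:ℝ) - k) - (m:ℝ) * ((1-ζ) + ζ*x)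
      = (m:ℝ) * (((k:ℝ)/m - ζ) * (a/k - 1) + ζ * (a/k - x)) := by
    field_simp
    ring
  have h1 : |a/k - x| ≤ ζ⁻¹ * (δ - ν - 1/m) := hclose x hx
  have h3 : |a/(k:ℝ) - 1| ≤ 1 := by
    rw [abs_le]
    constructor
    · have : 0 ≤ a / k := by positivity
      linarith
    · have : a / k ≤ 1 := by
        rw [div_le_one hK0]; exact haK
      linarith
  have ht1 : |((k:ℝ)/m - ζ) * (a/k - 1)| ≤ ν := by
    rw [abs_mul]
    calc |((k:ℝ)/m - ζ)| * |a/k - 1| ≤ ν * 1 :=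
          mul_le_mul hkν h3 (abs_nonneg _) hν0
      _ = ν := mul_one ν
  have ht2 : |ζ * (a/k - x)| ≤ δ - ν - 1/m := by
    rw [abs_mul, abs_of_pos hζ0]
    calc ζ * |a/k - x| ≤ ζ * (ζ⁻¹ * (δ - ν - 1/m)) :=
          mul_le_mul_of_nonneg_left h1 hζ0.le
      _ = δ - ν - 1/m := by field_simp
  have habs : |(numLe p x : ℝ) - (m:ℝ) * ((1-ζ) + ζ*x)| ≤ (m:ℝ) * δ - 1 := by
    rw [hcast, key, abs_mul, abs_of_pos hM0]
    have h4 := abs_add_le (((k:ℝ)/m - ζ) * (a/k - 1)) (ζ * (a/k - x))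
    have hb : |((k:ℝ)/m - ζ) * (a/k - 1) + ζ * (a/k - x)| ≤ δ - 1/m := by
      calc _ ≤ _ := h4
        _ ≤ ν + (δ - ν - 1/m) := add_le_add ht1 ht2
        _ = δ - 1/m := by ring
    calc (m:ℝ) * |((k:ℝ)/m - ζ) * (a/k - 1) + ζ * (a/k - x)| ≤ (m:ℝ) * (δ - 1/m) :=
          mul_le_mul_of_nonneg_left hb hM0.le
      _ = (m:ℝ) * δ - 1 := by field_simp
  rw [abs_le] at habs
  constructor <;> nlinarith [habs.1, habs.2]

theorem aux_ufix_facts (ρ : ℝ → ℝ) (hρcont : ContinuousOn ρ (Set.Icc 0 1))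
    (G : ℝ → ℝ) (hGcont : Continuous G)
    (hG1 : G (ρ 1) ≤ 1) (hG0 : 0 ≤ G (ρ 0)) (l : ℝ) (hl0 : 0 ≤ l) (hl1 : l ≤ 1) :
    (l ≤ G (ρ l) → (Ufix ρ l G ∈ Set.Icc l 1 ∧ G (ρ (Ufix ρ l G)) ≤ Ufix ρ l G ∧
      ∀ u, u ∈ Set.Icc l 1 → G (ρ u) ≤ u → Ufix ρ l G ≤ u)) ∧
    (¬ l ≤ G (ρ l) → (Ufix ρ l G ∈ Set.Icc 0 l ∧ Ufix ρ l G ≤ G (ρ (Ufix ρ l G)) ∧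
      ∀ u, u ∈ Set.Icc 0 l → u ≤ G (ρ u) → u ≤ Ufix ρ l G)) := by
  constructor
  · intro h
    rw [Ufix, if_pos h]
    set A : Set ℝ := {u | u ∈ Set.Icc l 1 ∧ G (ρ u) ≤ u} with hA
    have hone : (1:ℝ) ∈ A := ⟨⟨hl1, le_refl 1⟩, hG1⟩
    have hbdd : BddBelow A := ⟨l, fun u hu => hu.1.1⟩
    have hclosed : IsClosed A := by
      have he : A = Set.Icc l 1 ∩ (fun u => G (ρ u) - u) ⁻¹' Set.Iic 0 := by
        ext u
        simp only [hA, Set.mem_setOf_eq, Set.mem_inter_iff, Set.mem_preimage,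
          Set.mem_Iic, sub_nonpos]
      rw [he]
      exact ContinuousOn.preimage_isClosed_of_isClosed
        ((hGcont.comp_continuousOn (hρcont.mono (Set.Icc_subset_Icc hl0 le_rfl))).sub
          continuousOn_id) isClosed_Icc isClosed_Iic
    have hmem : sInf A ∈ A := hclosed.csInf_mem ⟨1, hone⟩ hbdd
    exact ⟨hmem.1, hmem.2, fun u hu h2 => csInf_le hbdd ⟨hu, h2⟩⟩
  · intro h
    rw [Ufix, if_neg h]
    set B : Set ℝ := {u | u ∈ Set.Icc 0 l ∧ u ≤ G (ρ u)} with hB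
    have hzero : (0:ℝ) ∈ B := ⟨⟨le_refl 0, hl0⟩, hG0⟩
    have hbdd : BddAbove B := ⟨l, fun u hu => hu.1.2⟩
    have hclosed : IsClosed B := by
      have he : B = Set.Icc 0 l ∩ (fun u => u - G (ρ u)) ⁻¹' Set.Iic 0 := by
        ext u
        simp only [hB, Set.mem_setOf_eq, Set.mem_inter_iff, Set.mem_preimage,
          Set.mem_Iic, sub_nonpos]
      rw [he]
      exact ContinuousOn.preimage_isClosed_of_isClosed
        (continuousOn_id.sub
          (hGcont.comp_continuousOn (hρcont.mono (Set.Icc_subset_Icc le_rfl hl1))))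
        isClosed_Icc isClosed_Iic
    have hmem : sSup B ∈ B := hclosed.csSup_mem ⟨0, hzero⟩ hbdd
    exact ⟨hmem.1, hmem.2, fun u hu h2 => le_csSup hbdd ⟨hu, h2⟩⟩
set_option maxHeartbeats 1600000 in
/-- If the p-values beyond the `k`-th one all vanish (Dirac-uniform type realization)
and the empirical c.d.f. `Ĝ_k` of the first `k` p-values is uniformly
`ζ⁻¹(δ - ν - 1/m)`-close to the identity, then the SUD index satisfies
`u⁻_δ ≤ k̂/m ≤ u⁺_δ`. -/
theorem sudIndex_between_uMinus_uPlus_of_close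
    (m : ℕ) (hm : 2 ≤ m)
    (ρ : ℝ → ℝ) (hρcont : ContinuousOn ρ (Set.Icc 0 1))
    (hρmono : MonotoneOn ρ (Set.Icc 0 1))
    (hρmap : ∀ x ∈ Set.Icc (0:ℝ) 1, ρ x ∈ Set.Icc (0:ℝ) 1)
    (lam : ℕ) (hlam : 1 ≤ lam ∧ lam ≤ m)
    (ζ δ : ℝ) (hζ : ζ ∈ Set.Ioo (0:ℝ) 1) (hδ : δ ∈ Set.Ioo (0:ℝ) 1)
    (k : ℕ) (hk : 1 ≤ k ∧ k ≤ m)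
    (p : Fin m → ℝ) (hp : ∀ i, p i ∈ Set.Icc (0:ℝ) 1)
    (hzero : ∀ i : Fin m, k ≤ (i : ℕ) → p i = 0)
    (ν : ℝ) (hν : ν ∈ Set.Icc (0:ℝ) 1) (hkν : |(k : ℝ) / m - ζ| ≤ ν)
    (hclose : ∀ x ∈ Set.Icc (0:ℝ) 1,
      |(numLeNull k p x : ℝ) / k - x| ≤ ζ⁻¹ * (δ - ν - 1 / m)) :
    uMinusDU ρ ((lam : ℝ) / m) ζ δ ≤
        (sudIndex lam (fun k' => ρ ((k' : ℝ) / m)) p : ℝ) / m ∧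
      (sudIndex lam (fun k' => ρ ((k' : ℝ) / m)) p : ℝ) / m ≤
        uPlusDU ρ ((lam : ℝ) / m) ζ δ := by
  obtain ⟨hlam1, hlam2⟩ := hlam
  obtain ⟨hk1, hk2⟩ := hk
  obtain ⟨hζ0, hζ1⟩ := hζ
  obtain ⟨hδ0, hδ1⟩ := hδ
  have hm0 : (0:ℝ) < m := by
    have h2m : (2:ℝ) ≤ m := by exact_mod_cast hm
    linarith
  have hbound := fun (x : ℝ) (hx : x ∈ Set.Icc (0:ℝ) 1) =>
    aux_numLe_bounds hm hk1 hk2 p hzero ζ δ ν hζ0 hν.1 hkν hclose x hx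
  set t : ℕ → ℝ := fun k' => ρ ((k' : ℝ) / m) with htdef
  set l : ℝ := (lam : ℝ) / m with hldef
  have hlam0 : (0:ℝ) < lam := by exact_mod_cast hlam1
  have hl0 : 0 < l := by rw [hldef]; exact div_pos hlam0 hm0
  have hl1 : l ≤ 1 := by
    rw [hldef, div_le_one hm0]; exact_mod_cast hlam2
  have hml : (m:ℝ) * l = lam := by rw [hldef]; field_simp
  have hfrac : ∀ j : ℕ, j ≤ m → ((j:ℝ)/m) ∈ Set.Icc (0:ℝ) 1 := by
    intro j hj
    constructor
    · positivity
    · rw [div_le_one hm0]; exact_mod_cast hj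
  have htval : ∀ j : ℕ, t j = ρ ((j:ℝ)/m) := fun j => rfl
  have htmem : ∀ j : ℕ, j ≤ m → t j ∈ Set.Icc (0:ℝ) 1 := fun j hj => hρmap _ (hfrac j hj)
  have D1 : ∀ j : ℕ, j ≤ m → j ≤ numLe p (t j) →
      (j:ℝ) ≤ (m:ℝ)*((1-ζ)+ζ*(t j)+δ)-1 := by
    intro j hj hcond
    have h1 : (j:ℝ) ≤ numLe p (t j) := by exact_mod_cast hcond
    exact h1.trans (hbound (t j) (htmem j hj)).2
  have D2 : ∀ j : ℕ, j ≤ m → (j:ℝ) ≤ (m:ℝ)*((1-ζ)+ζ*(t j)-δ)+1 → j ≤ numLe p (t j) := by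
    intro j hj h
    have h2 := (hbound (t j) (htmem j hj)).1
    exact_mod_cast h.trans h2
  have hρm : ∀ u v : ℝ, 0 ≤ u → u ≤ v → v ≤ 1 → ρ u ≤ ρ v := fun u v h1 h2 h3 =>
    hρmono ⟨h1, h2.trans h3⟩ ⟨h1.trans h2, h3⟩ h2
  set Gp : ℝ → ℝ := fun x => min ((1 - ζ) + ζ * x + δ) 1 with hGpdef
  set Gm : ℝ → ℝ := fun x => max ((1 - ζ) + ζ * x - δ) 0 with hGmdef
  have hρ0 : ρ 0 ∈ Set.Icc (0:ℝ) 1 := hρmap 0 ⟨le_rfl, zero_le_one⟩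
  have hρ1 : ρ 1 ∈ Set.Icc (0:ℝ) 1 := hρmap 1 ⟨zero_le_one, le_rfl⟩
  have hGpc : Continuous Gp := by
    rw [hGpdef]
    exact (((continuous_const.add (continuous_const.mul continuous_id)).add
      continuous_const).min continuous_const)
  have hGmc : Continuous Gm := by
    rw [hGmdef]
    exact (((continuous_const.add (continuous_const.mul continuous_id)).sub
      continuous_const).max continuous_const)
  have hGp1 : Gp (ρ 1) ≤ 1 := min_le_right _ _
  have hGp0 : 0 ≤ Gp (ρ 0) := by
    apply le_min _ zero_le_one
    nlinarith [hρ0.1, hρ0.2]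
  have hGm1 : Gm (ρ 1) ≤ 1 := by
    apply max_le _ zero_le_one
    nlinarith [hρ1.1, hρ1.2]
  have hGm0 : 0 ≤ Gm (ρ 0) := le_max_right _ _
  obtain ⟨hufp1, hufp2⟩ := aux_ufix_facts ρ hρcont Gp hGpc hGp1 hGp0 l hl0.le hl1
  obtain ⟨hufm1, hufm2⟩ := aux_ufix_facts ρ hρcont Gm hGmc hGm1 hGm0 l hl0.le hl1
  rw [show uMinusDU ρ l ζ δ = Ufix ρ l Gm from rfl,
    show uPlusDU ρ l ζ δ = Ufix ρ l Gp from rfl]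
  set uP : ℝ := Ufix ρ l Gp with huPdef
  set uM : ℝ := Ufix ρ l Gm with huMdef
  clear_value uP uM
  rw [sudIndex]
  split_ifs with hC
  · -- step-down branch: lam ≤ numLe p (t lam)
    set S : Set ℕ := {k | k ≤ m ∧ ∀ k', lam ≤ k' → k' ≤ k → k' ≤ numLe p (t k')} with hSdef
    set kh : ℕ := sSup S with hkhdef
    have hSbdd : BddAbove S := ⟨m, fun x hx => hx.1⟩
    have hSlam : lam ∈ S := by
      refine ⟨hlam2, fun k' h1 h2 => ?_⟩
      have hk' : k' = lam := le_antisymm h2 h1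
      rw [hk']; exact hC
    have hkhmem : kh ∈ S := Nat.sSup_mem ⟨lam, hSlam⟩ hSbdd
    obtain ⟨hkhm, hkhcond⟩ := hkhmem
    have hlamkh : lam ≤ kh := le_csSup hSbdd hSlam
    have hlkh : l ≤ (kh : ℝ)/m := by
      rw [hldef, div_le_div_iff_of_pos_right hm0]
      exact_mod_cast hlamkh
    constructor
    · -- lower bound
      by_cases hV : l ≤ Gm (ρ l)
      · obtain ⟨humIcc, humle, hmin⟩ := hufm1 hV
        by_contra hcon
        push_neg at hcon
        have hkhIcc : (kh : ℝ)/m ∈ Set.Icc l 1 := ⟨hlkh, (hfrac _ hkhm).2⟩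
        have hnotA : ¬ (Gm (ρ ((kh : ℝ)/m)) ≤ (kh : ℝ)/m) :=
          fun h => (not_le.mpr hcon) (hmin _ hkhIcc h)
        have hgt : (kh : ℝ)/m < (1-ζ)+ζ*(ρ ((kh : ℝ)/m))-δ := by
          rw [hGmdef] at hnotA
          rcases lt_max_iff.mp (not_le.mp hnotA) with h | h
          · exact h
          · exfalso
            have : (0:ℝ) ≤ (kh : ℝ)/m := by positivity
            linarith
        have hkhlt : kh < m := by
          by_contra hh
          push_neg at hh
          have he : kh = m := le_antisymm hkhm hh
          rw [he, div_self hm0.ne'] at hcon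
          exact absurd humIcc.2 (not_le.mpr hcon)
        have htle : t kh ≤ t (kh + 1) := by
          rw [htval, htval]
          apply hρm _ _ (by positivity) _ (hfrac (kh + 1) (by omega)).2
          · rw [div_le_div_iff_of_pos_right hm0]
            push_cast
            linarith
        have h2 : (kh : ℝ) < (m:ℝ)*((1-ζ)+ζ*(t kh)-δ) := by
          have h3 := (mul_lt_mul_iff_right₀ hm0).mpr hgt
          rw [show (m:ℝ) * ((kh:ℝ)/m) = (kh:ℝ) from by field_simp] at h3
          rw [htval kh]
          exact h3
        have hnext : ((kh + 1 : ℕ):ℝ) ≤ (m:ℝ)*((1-ζ)+ζ*(t (kh + 1))-δ)+1 := by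
          push_cast
          linarith [mul_le_mul_of_nonneg_left htle (mul_nonneg hm0.le hζ0.le)]
        have hcond1 : kh + 1 ≤ numLe p (t (kh + 1)) := D2 (kh + 1) (by omega) hnext
        have hmem1 : kh + 1 ∈ S := by
          refine ⟨by omega, fun k' h1 h2 => ?_⟩
          rcases Nat.lt_or_ge k' (kh + 1) with h3 | h3
          · exact hkhcond k' h1 (by omega)
          · have he : k' = kh + 1 := by omega
            rw [he]; exact hcond1
        have := le_csSup hSbdd hmem1
        omega
      · obtain ⟨humIcc, _, _⟩ := hufm2 hV
        exact humIcc.2.trans hlkh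
    · -- upper bound
      by_cases hU : l ≤ Gp (ρ l)
      · obtain ⟨hupIcc, huple, hmin⟩ := hufp1 hU
        by_contra hcon
        push_neg at hcon
        rw [hGpdef] at huple
        rcases min_le_iff.mp huple with h1 | h1
        · have hmup : (lam:ℝ) ≤ (m:ℝ) * uP := by
            rw [← hml]
            exact mul_le_mul_of_nonneg_left hupIcc.1 hm0.le
          have hup0 : (0:ℝ) ≤ (m:ℝ) * uP := le_trans hlam0.le hmup
          have hj1lam : lam ≤ ⌊(m:ℝ) * uP⌋₊ := Nat.le_floor hmup
          have hj1r : ((⌊(m:ℝ) * uP⌋₊ : ℕ):ℝ) ≤ (m:ℝ) * uP :=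
            Nat.floor_le hup0
          have hmupkh : (m:ℝ) * uP < kh := by
            have h3 := (mul_lt_mul_iff_right₀ hm0).mpr hcon
            rwa [show (m:ℝ) * ((kh:ℝ)/m) = (kh:ℝ) from by field_simp] at h3
          have hj1kh : ⌊(m:ℝ) * uP⌋₊ ≤ kh := by
            have h4 : ((⌊(m:ℝ) * uP⌋₊ : ℕ):ℝ) < (kh : ℝ) :=
              lt_of_le_of_lt hj1r hmupkh
            exact_mod_cast h4.le
          have hj1m : ⌊(m:ℝ) * uP⌋₊ ≤ m := hj1kh.trans hkhm
          have hD := D1 _ hj1m (hkhcond _ hj1lam hj1kh)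
          have htle : t ⌊(m:ℝ) * uP⌋₊ ≤ ρ (uP) := by
            rw [htval]
            apply hρm _ _ (by positivity) _ hupIcc.2
            rw [div_le_iff₀ hm0]
            linarith [hj1r]
          have hfl : (m:ℝ) * uP < ⌊(m:ℝ) * uP⌋₊ + 1 :=
            Nat.lt_floor_add_one _
          linarith [mul_le_mul_of_nonneg_left htle (mul_nonneg hm0.le hζ0.le),
            mul_le_mul_of_nonneg_left h1 hm0.le]
        · have h5 : (kh : ℝ)/m ≤ 1 := (hfrac _ hkhm).2
          linarith
      · exfalso
        apply hU
        have hD := D1 lam hlam2 hC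
        rw [htval] at hD
        rw [← hldef] at hD
        rw [hGpdef]
        apply le_min _ hl1
        nlinarith [hD, hml, hm0]
  · -- step-up branch: ¬ lam ≤ numLe p (t lam)
    set S : Set ℕ := {k | k ≤ lam ∧ k ≤ numLe p (t k)} with hSdef
    set kh : ℕ := sSup S with hkhdef
    have hSbdd : BddAbove S := ⟨lam, fun x hx => hx.1⟩
    have hS0 : 0 ∈ S := ⟨Nat.zero_le _, Nat.zero_le _⟩
    have hkhmem : kh ∈ S := Nat.sSup_mem ⟨0, hS0⟩ hSbdd
    obtain ⟨hkhlam, hkhcond⟩ := hkhmem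
    have hkhm : kh ≤ m := hkhlam.trans hlam2
    have hkhl : (kh : ℝ)/m ≤ l := by
      rw [hldef, div_le_div_iff_of_pos_right hm0]
      exact_mod_cast hkhlam
    constructor
    · -- lower bound
      by_cases hV : l ≤ Gm (ρ l)
      · exfalso
        apply hC
        rw [hGmdef] at hV
        have hV2 : l ≤ (1-ζ)+ζ*(ρ l)-δ := by
          rcases le_max_iff.mp hV with h | h
          · exact h
          · linarith
        apply D2 lam hlam2
        rw [htval, ← hldef]
        linarith [mul_le_mul_of_nonneg_left hV2 hm0.le, hml]
      · obtain ⟨humIcc, humle, hmax⟩ := hufm2 hV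
        by_contra hcon
        push_neg at hcon
        have hum0 : 0 < uM := lt_of_le_of_lt (by positivity) hcon
        have hmum : (m:ℝ) * uM ≤ (lam:ℝ) := by
          rw [← hml]
          exact mul_le_mul_of_nonneg_left humIcc.2 hm0.le
        have hmum0 : (0:ℝ) ≤ (m:ℝ) * uM := by positivity
        have hjlam : ⌈(m:ℝ) * uM⌉₊ ≤ lam := by
          rw [Nat.ceil_le]; exact hmum
        have hjm : ⌈(m:ℝ) * uM⌉₊ ≤ m := hjlam.trans hlam2
        have hjr : (m:ℝ) * uM ≤ (⌈(m:ℝ) * uM⌉₊ : ℝ) := Nat.le_ceil _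
        have hkhj : kh < ⌈(m:ℝ) * uM⌉₊ := by
          have h4 : (kh : ℝ) < (⌈(m:ℝ) * uM⌉₊ : ℝ) := by
            have h5 := (mul_lt_mul_iff_right₀ hm0).mpr hcon
            rw [show (m:ℝ) * ((kh:ℝ)/m) = (kh:ℝ) from by field_simp] at h5
            exact lt_of_lt_of_le h5 hjr
          exact_mod_cast h4
        have humt : uM ≤ (1-ζ)+ζ*(t ⌈(m:ℝ) * uM⌉₊)-δ := by
          have hle1 : ρ (uM) ≤ t ⌈(m:ℝ) * uM⌉₊ := by
            rw [htval]
            apply hρm _ _ (le_trans humIcc.1 (le_refl _)) _ (hfrac _ hjm).2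
            rw [le_div_iff₀ hm0, mul_comm]
            exact hjr
          have hle2 : Gm (ρ (uM)) ≤ Gm (t ⌈(m:ℝ) * uM⌉₊) := by
            rw [hGmdef]
            exact max_le_max (by linarith [mul_le_mul_of_nonneg_left hle1 hζ0.le]) le_rfl
          have hle3 : uM ≤ Gm (t ⌈(m:ℝ) * uM⌉₊) := le_trans humle hle2
          rw [hGmdef] at hle3
          rcases le_max_iff.mp hle3 with h | h
          · exact h
          · linarith
        have hcnd : ⌈(m:ℝ) * uM⌉₊ ≤ numLe p (t ⌈(m:ℝ) * uM⌉₊) := by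
          apply D2 _ hjm
          have hcl : ((⌈(m:ℝ) * uM⌉₊:ℕ):ℝ) < (m:ℝ) * uM + 1 :=
            Nat.ceil_lt_add_one hmum0
          linarith [mul_le_mul_of_nonneg_left humt hm0.le]
        have := le_csSup hSbdd (⟨hjlam, hcnd⟩ : ⌈(m:ℝ) * uM⌉₊ ∈ S)
        omega
    · -- upper bound
      by_cases hU : l ≤ Gp (ρ l)
      · obtain ⟨hupIcc, _, _⟩ := hufp1 hU
        exact hkhl.trans hupIcc.1
      · obtain ⟨hupIcc, huple, hmax⟩ := hufp2 hU
        apply hmax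
        · exact ⟨by positivity, hkhl⟩
        · have hD := D1 _ hkhm hkhcond
          rw [hGpdef]
          apply le_min _ (hfrac _ hkhm).2
          rw [htval] at hD
          rw [div_le_iff₀ hm0]
          linarith [hD]
end
end
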